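/- arXiv:2308.07531 — 4 statements merged into one kernel-verified Lean document; each statement's English description precedes it below -/
import Mathlib

section
/- Let n ≥ 1, a > 0, Γ₀ > 0 and M ∈ ℝⁿ. Define, for t > 0 and ξ ∈ ℝⁿ \ {0}, Ê₆(t,ξ) := −(ξ·M) · sin(a|ξ|t)/(a|ξ|) · e^{−Γ₀|ξ|² t}. Then lim_{t→∞} t^{n/2} ∫_{ℝⁿ} |Ê₆(t,ξ)|² dξ = ( σ_{n−1} / (4 n a²) ) (2Γ₀)^{−n/2} Γ(n/2) |M|², where σ_{n−1} is the surface measure of the unit sphere S^{n−1} ⊂ ℝⁿ and Γ(·) is the Gamma function. In particular, if M ≠ 0 there exist c > 0 and t₀ > 0 such that ∫_{ℝⁿ} |Ê₆(t,ξ)|² dξ ≥ c t^{−n/2} |M|² for all t ≥ t₀. -/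
open MeasureTheory
open Filter Real Complex
open scoped FourierTransform

namespace Stmt13Aux

variable {n : ℕ}

lemma abs_coord_le_norm (x : EuclideanSpace ℝ (Fin n)) (i : Fin n) : |x i| ≤ ‖x‖ := by
  rw [EuclideanSpace.norm_eq, ← Real.sqrt_sq_eq_abs]
  apply Real.sqrt_le_sqrt
  have := Finset.single_le_sum (f := fun j => ‖x j‖ ^ 2)
    (fun j _ => by positivity) (Finset.mem_univ i)
  simpa [Real.norm_eq_abs, sq_abs] using this

lemma norm_sq_eq (x : EuclideanSpace ℝ (Fin n)) : ‖x‖ ^ 2 = ∑ i, x i * x i := by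
  rw [EuclideanSpace.norm_eq, Real.sq_sqrt (by positivity)]
  simp [Real.norm_eq_abs, sq_abs, pow_two]

lemma integral_comp_isometry (f : EuclideanSpace ℝ (Fin n) → ℝ)
    (T : EuclideanSpace ℝ (Fin n) ≃ₗᵢ[ℝ] EuclideanSpace ℝ (Fin n)) :
    ∫ x, f (T x) = ∫ x, f x :=
  T.measurePreserving.integral_comp T.toHomeomorph.measurableEmbedding f

lemma integral_cross (G : ℝ → ℝ) {i j : Fin n} (hij : i ≠ j) :
    ∫ x : EuclideanSpace ℝ (Fin n), x i * x j * G ‖x‖ = 0 := by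
  classical
  set T : EuclideanSpace ℝ (Fin n) ≃ₗᵢ[ℝ] EuclideanSpace ℝ (Fin n) :=
    LinearIsometryEquiv.piLpCongrRight 2
      (fun k => if k = j then LinearIsometryEquiv.neg ℝ else LinearIsometryEquiv.refl ℝ ℝ) with hT
  have hTk : ∀ (x : EuclideanSpace ℝ (Fin n)) (k : Fin n),
      T x k = if k = j then -(x k) else x k := by
    intro x k
    rw [hT]
    rw [LinearIsometryEquiv.piLpCongrRight_apply]
    rw [PiLp.toLp_apply]
    rw [apply_ite (fun g : ℝ ≃ₗᵢ[ℝ] ℝ => g (x k))]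
    simp
  have h := integral_comp_isometry (fun x => x i * x j * G ‖x‖) T
  have heq : (fun x : EuclideanSpace ℝ (Fin n) => T x i * T x j * G ‖T x‖)
      = fun x => -(x i * x j * G ‖x‖) := by
    funext x
    rw [hTk x i, hTk x j, if_neg hij, if_pos rfl, T.norm_map]
    ring
  rw [heq] at h
  rw [integral_neg] at h
  linarith

lemma integral_diag (G : ℝ → ℝ) (i i0 : Fin n) :
    ∫ x : EuclideanSpace ℝ (Fin n), x i * x i * G ‖x‖
      = ∫ x : EuclideanSpace ℝ (Fin n), x i0 * x i0 * G ‖x‖ := by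
  set T : EuclideanSpace ℝ (Fin n) ≃ₗᵢ[ℝ] EuclideanSpace ℝ (Fin n) :=
    LinearIsometryEquiv.piLpCongrLeft 2 ℝ ℝ (Equiv.swap i i0) with hT
  have h := integral_comp_isometry (fun x => x i * x i * G ‖x‖) T
  have hTk : ∀ (x : EuclideanSpace ℝ (Fin n)), T x i = x i0 := by
    intro x
    rw [hT, LinearIsometryEquiv.piLpCongrLeft_apply]
    show x ((Equiv.swap i i0).symm i) = x i0
    rw [Equiv.symm_swap, Equiv.swap_apply_left]
  have heq : (fun x : EuclideanSpace ℝ (Fin n) => T x i * T x i * G ‖T x‖)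
      = fun x => x i0 * x i0 * G ‖x‖ := by
    funext x
    rw [hTk x, T.norm_map]
  rw [heq] at h
  exact h.symm

lemma integral_dot_sq (hn : 1 ≤ n) (M : EuclideanSpace ℝ (Fin n)) (G : ℝ → ℝ)
    (hint : ∀ i j : Fin n, Integrable (fun x : EuclideanSpace ℝ (Fin n) => x i * x j * G ‖x‖)) :
    ∫ x : EuclideanSpace ℝ (Fin n), (∑ i, x i * M i) ^ 2 * G ‖x‖
      = ‖M‖ ^ 2 / n * ∫ x : EuclideanSpace ℝ (Fin n), ‖x‖ ^ 2 * G ‖x‖ := by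
  have i0 : Fin n := ⟨0, hn⟩
  set A := ∫ x : EuclideanSpace ℝ (Fin n), x i0 * x i0 * G ‖x‖ with hA
  have step1 : ∫ x : EuclideanSpace ℝ (Fin n), (∑ i, x i * M i) ^ 2 * G ‖x‖
      = ∑ i, ∑ j, (M i * M j) * ∫ x : EuclideanSpace ℝ (Fin n), x i * x j * G ‖x‖ := by
    have hexp : ∀ x : EuclideanSpace ℝ (Fin n), (∑ i, x i * M i) ^ 2 * G ‖x‖
        = ∑ i, ∑ j, (M i * M j) * (x i * x j * G ‖x‖) := by
      intro x
      rw [sq, Finset.sum_mul_sum]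
      rw [Finset.sum_mul]
      refine Finset.sum_congr rfl fun i _ => ?_
      rw [Finset.sum_mul]
      refine Finset.sum_congr rfl fun j _ => ?_
      ring
    simp_rw [hexp]
    rw [integral_finset_sum _ (fun i _ => integrable_finset_sum _
      (fun j _ => (hint i j).const_mul _))]
    refine Finset.sum_congr rfl fun i _ => ?_
    rw [integral_finset_sum _ (fun j _ => (hint i j).const_mul _)]
    refine Finset.sum_congr rfl fun j _ => ?_
    exact integral_const_mul _ _
  have step2 : ∀ i : Fin n, ∑ j, (M i * M j) * ∫ x : EuclideanSpace ℝ (Fin n), x i * x j * G ‖x‖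
      = M i * M i * A := by
    intro i
    rw [Finset.sum_eq_single i]
    · rw [integral_diag G i i0]
    · intro j _ hji
      rw [integral_cross G (Ne.symm hji), mul_zero]
    · intro h; exact absurd (Finset.mem_univ i) h
  have step3 : (n : ℝ) * A = ∫ x : EuclideanSpace ℝ (Fin n), ‖x‖ ^ 2 * G ‖x‖ := by
    have : ∫ x : EuclideanSpace ℝ (Fin n), ‖x‖ ^ 2 * G ‖x‖
        = ∑ i : Fin n, ∫ x : EuclideanSpace ℝ (Fin n), x i * x i * G ‖x‖ := by
      rw [← integral_finset_sum _ (fun i _ => hint i i)]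
      congr 1
      funext x
      rw [norm_sq_eq, Finset.sum_mul]
    rw [this]
    rw [Finset.sum_congr rfl (fun i _ => integral_diag G i i0)]
    simp [mul_comm, hA]
  have hM : ‖M‖ ^ 2 = ∑ i, M i * M i := norm_sq_eq M
  rw [step1, Finset.sum_congr rfl (fun i _ => step2 i), ← Finset.sum_mul, ← hM, ← step3]
  have hn' : (n : ℝ) ≠ 0 := by positivity
  field_simp

lemma rl_cos (g : ℝ → ℝ) (hg : Integrable g) :
    Tendsto (fun s : ℝ => ∫ v, g v * Real.cos (v * s)) atTop (nhds 0) := by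
  have h := Real.tendsto_integral_exp_smul_cocompact (fun v => (g v : ℂ))
  have hre : Tendsto (fun w : ℝ => (∫ v : ℝ, 𝐞 (-(v * w)) • (g v : ℂ)).re)
      (cocompact ℝ) (nhds 0) := by
    have := (Complex.continuous_re.tendsto 0).comp h
    simpa [Function.comp_def] using this
  have key : ∀ w : ℝ, (∫ v : ℝ, 𝐞 (-(v * w)) • (g v : ℂ)).re
      = ∫ v, g v * Real.cos (2 * π * (v * w)) := by
    intro w
    have hint : Integrable fun v : ℝ => 𝐞 (-(v * w)) • (g v : ℂ) := by
      have : Integrable fun v : ℝ => (g v : ℂ) := by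
        rw [← integrable_norm_iff]
        · simpa using hg.norm
        · exact Complex.continuous_ofReal.comp_aestronglyMeasurable hg.aestronglyMeasurable
      apply (integrable_norm_iff ?_).mp
      · simpa [Circle.norm_smul] using this.norm
      · exact (Real.continuous_fourierChar.comp (by fun_prop)).aestronglyMeasurable.smul
          this.aestronglyMeasurable
    have hswap : (∫ v : ℝ, 𝐞 (-(v * w)) • (g v : ℂ)).re
        = ∫ v : ℝ, ((𝐞 (-(v * w)) • (g v : ℂ)).re) := (integral_re hint).symm
    rw [hswap]
    congr 1
    funext v
    rw [Circle.smul_def, Real.fourierChar_apply]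
    rw [smul_eq_mul, Complex.mul_re]
    simp only [Complex.ofReal_re, Complex.ofReal_im, mul_zero, sub_zero,
      Complex.exp_ofReal_mul_I_re]
    rw [mul_comm]
    congr 1
    rw [show 2 * π * -(v * w) = -(2 * π * (v * w)) by ring, Real.cos_neg]
  simp_rw [key] at hre
  have hmap : Tendsto (fun s : ℝ => s / (2 * π)) atTop (cocompact ℝ) := by
    refine Tendsto.mono_right ?_ _root_.atTop_le_cocompact
    exact tendsto_id.atTop_div_const (by positivity)
  have := hre.comp hmap
  refine this.congr fun s => ?_
  simp only [Function.comp_apply]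
  congr 1
  funext v
  congr 2
  field_simp

lemma gauss_integrable {b : ℝ} (hb : 0 < b) :
    Integrable (fun x : EuclideanSpace ℝ (Fin n) => Real.exp (-(b * ‖x‖ ^ 2))) := by
  have h := (GaussianFourier.integrable_cexp_neg_mul_sq_norm_add
    (V := EuclideanSpace ℝ (Fin n)) (b := (b : ℂ)) (by simpa using hb) 0 0).norm
  refine h.congr ?_
  filter_upwards with v
  rw [Complex.norm_exp]
  have h2 : (-(b:ℂ) * (‖v‖:ℂ) ^ 2 + 0 * ((inner ℝ (0 : EuclideanSpace ℝ (Fin n)) v : ℝ) : ℂ))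
      = ((-(b * ‖v‖ ^ 2) : ℝ) : ℂ) := by push_cast; ring
  rw [h2, Complex.ofReal_re]

lemma gauss_value {b : ℝ} (hb : 0 < b) :
    ∫ x : EuclideanSpace ℝ (Fin n), Real.exp (-(b * ‖x‖ ^ 2)) = (π / b) ^ ((n : ℝ) / 2) := by
  have h := GaussianFourier.integral_rexp_neg_mul_sq_norm (V := EuclideanSpace ℝ (Fin n)) hb
  rw [finrank_euclideanSpace_fin] at h
  rw [← h]
  congr 1
  funext v
  rw [neg_mul]

lemma osc (hn : 1 ≤ n) {Γ₀ a : ℝ} (hΓ₀ : 0 < Γ₀) (ha : 0 < a) :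
    Tendsto (fun s : ℝ => ∫ x : EuclideanSpace ℝ (Fin n),
      Real.exp (-(2 * Γ₀ * ‖x‖ ^ 2)) * Real.cos (2 * a * ‖x‖ * s)) atTop (nhds 0) := by
  haveI : NeZero n := ⟨by omega⟩
  haveI : Nontrivial (EuclideanSpace ℝ (Fin n)) := inferInstance
  set κ : ℝ := (n : ℝ) * (volume (Metric.ball (0 : EuclideanSpace ℝ (Fin n)) 1)).toReal with hκ
  set g : ℝ → ℝ := Set.indicator (Set.Ioi 0)
    (fun y => y ^ (n - 1) * Real.exp (-(2 * Γ₀ * y ^ 2))) with hg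
  have hgint : Integrable g := by
    have h1 : Integrable (fun y : ℝ => y ^ ((n : ℝ) - 1) * Real.exp (-(2 * Γ₀) * y ^ 2)) :=
      integrable_rpow_mul_exp_neg_mul_sq (by positivity)
        (by
          have h1 : (1 : ℝ) ≤ (n : ℝ) := by exact_mod_cast hn
          linarith)
    have h2 : Integrable (fun y : ℝ => y ^ (n - 1) * Real.exp (-(2 * Γ₀ * y ^ 2))) := by
      refine h1.congr ?_
      filter_upwards with y
      rw [show ((n : ℝ) - 1) = ((n - 1 : ℕ) : ℝ) by
        rw [Nat.cast_sub hn]; norm_num]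
      rw [Real.rpow_natCast, neg_mul]
    exact h2.indicator measurableSet_Ioi
  have hcomp : Tendsto (fun s : ℝ => κ * ∫ v, g v * Real.cos (v * (2 * a * s)))
      atTop (nhds 0) := by
    have h1 := (rl_cos g hgint).comp
      (Tendsto.const_mul_atTop (by positivity : (0:ℝ) < 2 * a) tendsto_id)
    have h2 := h1.const_mul κ
    simpa using h2
  refine hcomp.congr fun s => ?_
  rw [MeasureTheory.integral_fun_norm_addHaar (volume : Measure (EuclideanSpace ℝ (Fin n)))
    (fun r => Real.exp (-(2 * Γ₀ * r ^ 2)) * Real.cos (2 * a * r * s))]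
  rw [finrank_euclideanSpace_fin]
  rw [nsmul_eq_mul, smul_eq_mul, hκ]
  rw [mul_assoc]
  congr 1
  have : ∀ v : ℝ, g v * Real.cos (v * (2 * a * s))
      = Set.indicator (Set.Ioi 0)
          (fun y => y ^ (n - 1) * (Real.exp (-(2 * Γ₀ * y ^ 2)) * Real.cos (2 * a * y * s))) v := by
    intro v
    by_cases hv : v ∈ Set.Ioi (0 : ℝ)
    · rw [hg]
      rw [Set.indicator_of_mem hv, Set.indicator_of_mem hv]
      rw [show v * (2 * a * s) = 2 * a * v * s by ring]
      ring
    · rw [hg, Set.indicator_of_notMem hv, Set.indicator_of_notMem hv, zero_mul]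
  rw [funext this, MeasureTheory.integral_indicator measurableSet_Ioi]
  congr 1

noncomputable def Gs (a Γ₀ s : ℝ) : ℝ → ℝ :=
  fun r => Real.sin (a * r * s) ^ 2 * Real.exp (-(Γ₀ * r ^ 2)) ^ 2 / (a ^ 2 * r ^ 2)

lemma exp_sq (y : ℝ) : Real.exp y ^ 2 = Real.exp (2 * y) := by
  rw [sq, ← Real.exp_add]; congr 1; ring

lemma Gs_nonneg {a Γ₀ s : ℝ} (r : ℝ) : 0 ≤ Gs a Γ₀ s r := by
  unfold Gs; positivity

lemma Gs_bound {a Γ₀ s : ℝ} (ha : 0 < a) (x : EuclideanSpace ℝ (Fin n)) (i j : Fin n) :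
    ‖x i * x j * Gs a Γ₀ s ‖x‖‖ ≤ 1 / a ^ 2 * Real.exp (-(2 * Γ₀ * ‖x‖ ^ 2)) := by
  rcases eq_or_ne x 0 with rfl | hx
  · have h0 : ∀ k : Fin n, (0 : EuclideanSpace ℝ (Fin n)) k = 0 := fun k => rfl
    rw [h0 i, h0 j]
    simp only [zero_mul, norm_zero]
    positivity
  · have hr : 0 < ‖x‖ := norm_pos_iff.mpr hx
    have h1 : ‖x i * x j * Gs a Γ₀ s ‖x‖‖ ≤ ‖x‖ * ‖x‖ * Gs a Γ₀ s ‖x‖ := by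
      rw [Real.norm_eq_abs, abs_mul, abs_mul, _root_.abs_of_nonneg (Gs_nonneg _)]
      gcongr
      · exact Gs_nonneg _
      · exact abs_coord_le_norm x i
      · exact abs_coord_le_norm x j
    refine h1.trans ?_
    have h2 : ‖x‖ * ‖x‖ * Gs a Γ₀ s ‖x‖
        = Real.sin (a * ‖x‖ * s) ^ 2 * Real.exp (-(2 * Γ₀ * ‖x‖ ^ 2)) / a ^ 2 := by
      unfold Gs
      rw [show Real.exp (-(Γ₀ * ‖x‖ ^ 2)) ^ 2 = Real.exp (-(2 * Γ₀ * ‖x‖ ^ 2)) by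
        rw [exp_sq]; congr 1; ring]
      field_simp
    rw [h2]
    calc Real.sin (a * ‖x‖ * s) ^ 2 * Real.exp (-(2 * Γ₀ * ‖x‖ ^ 2)) / a ^ 2
        ≤ 1 * Real.exp (-(2 * Γ₀ * ‖x‖ ^ 2)) / a ^ 2 := by
          gcongr
          exact Real.sin_sq_le_one _
      _ = 1 / a ^ 2 * Real.exp (-(2 * Γ₀ * ‖x‖ ^ 2)) := by ring

lemma Gs_measurable {a Γ₀ s : ℝ} : Measurable fun x : EuclideanSpace ℝ (Fin n) => Gs a Γ₀ s ‖x‖ := by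
  unfold Gs
  have : Measurable fun x : EuclideanSpace ℝ (Fin n) => ‖x‖ := measurable_norm
  fun_prop

lemma coord_measurable (i : Fin n) : Measurable fun x : EuclideanSpace ℝ (Fin n) => x i :=
  (EuclideanSpace.proj (𝕜 := ℝ) i).continuous.measurable

lemma hint_lemma {a Γ₀ s : ℝ} (ha : 0 < a) (hΓ₀ : 0 < Γ₀) (i j : Fin n) :
    Integrable (fun x : EuclideanSpace ℝ (Fin n) => x i * x j * Gs a Γ₀ s ‖x‖) := by
  refine Integrable.mono' ((gauss_integrable (by positivity : (0:ℝ) < 2 * Γ₀)).const_mul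
    (1 / a ^ 2)) ?_ ?_
  · exact (((coord_measurable i).mul (coord_measurable j)).mul Gs_measurable).aestronglyMeasurable
  · filter_upwards with x
    exact Gs_bound ha x i j

lemma main_eq (hn : 1 ≤ n) {a Γ₀ : ℝ} (ha : 0 < a) (hΓ₀ : 0 < Γ₀)
    (M : EuclideanSpace ℝ (Fin n)) (E6 : ℝ → EuclideanSpace ℝ (Fin n) → ℝ)
    (hE6 : ∀ t : ℝ, ∀ ξ : EuclideanSpace ℝ (Fin n), ξ ≠ 0 →
      E6 t ξ = -(∑ i, ξ i * M i) * (Real.sin (a * ‖ξ‖ * t) / (a * ‖ξ‖))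
          * Real.exp (-(Γ₀ * ‖ξ‖ ^ 2 * t)))
    (t : ℝ) (ht : 0 < t) :
    t ^ ((n : ℝ) / 2) * ∫ ξ, (E6 t ξ) ^ 2
      = ‖M‖ ^ 2 / (n : ℝ) *
        ((1 / (2 * a ^ 2)) * (∫ x : EuclideanSpace ℝ (Fin n), Real.exp (-(2 * Γ₀ * ‖x‖ ^ 2)))
          - (1 / (2 * a ^ 2)) * ∫ x : EuclideanSpace ℝ (Fin n),
              Real.exp (-(2 * Γ₀ * ‖x‖ ^ 2)) * Real.cos (2 * a * ‖x‖ * Real.sqrt t)) := by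
  haveI : NeZero n := ⟨by omega⟩
  haveI : Nontrivial (EuclideanSpace ℝ (Fin n)) := inferInstance
  have ha' : a ≠ 0 := ne_of_gt ha
  set s : ℝ := Real.sqrt t with hs
  have hs0 : 0 < s := Real.sqrt_pos.mpr ht
  have hss : s * s = t := Real.mul_self_sqrt ht.le
  set c : ℝ := s⁻¹ with hc
  have hc0 : 0 < c := inv_pos.mpr hs0
  set f : EuclideanSpace ℝ (Fin n) → ℝ := fun ξ =>
    (∑ i, ξ i * M i) ^ 2 *
      (Real.sin (a * ‖ξ‖ * t) ^ 2 * Real.exp (-(Γ₀ * ‖ξ‖ ^ 2 * t)) ^ 2 / (a ^ 2 * ‖ξ‖ ^ 2))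
    with hf
  have hzero : (volume : Measure (EuclideanSpace ℝ (Fin n))) {0} = 0 := measure_singleton 0
  have hae : ∀ᵐ ξ : EuclideanSpace ℝ (Fin n), ξ ≠ 0 := by
    rw [ae_iff]
    convert hzero using 2
    ext ξ
    simp
  have hI : ∫ ξ, (E6 t ξ) ^ 2 = ∫ ξ, f ξ := by
    refine integral_congr_ae ?_
    filter_upwards [hae] with ξ hξ
    rw [hE6 t ξ hξ, hf]
    have hnξ : ‖ξ‖ ≠ 0 := norm_ne_zero_iff.mpr hξ
    field_simp
  have hcv := MeasureTheory.Measure.integral_comp_smul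
    (volume : Measure (EuclideanSpace ℝ (Fin n))) f c
  rw [finrank_euclideanSpace_fin] at hcv
  have hcn : |((c ^ n)⁻¹ : ℝ)| = s ^ n := by
    rw [hc, ← inv_pow, inv_inv, abs_of_pos (pow_pos hs0 n)]
  rw [hcn, smul_eq_mul] at hcv
  have hpow : t ^ ((n : ℝ) / 2) = s ^ n := by
    rw [hs, Real.sqrt_eq_rpow, ← Real.rpow_natCast (t ^ ((1:ℝ)/2)) n, ← Real.rpow_mul ht.le]
    congr 1
    ring
  have hpt : ∀ x : EuclideanSpace ℝ (Fin n),
      f (c • x) = (∑ i, x i * M i) ^ 2 * Gs a Γ₀ s ‖x‖ := by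
    intro x
    rcases eq_or_ne x 0 with rfl | hx
    · have h1 : c • (0 : EuclideanSpace ℝ (Fin n)) = 0 := smul_zero c
      rw [h1]
      simp only [hf, Gs]
      have h2 : ∀ k : Fin n, (0 : EuclideanSpace ℝ (Fin n)) k = 0 := fun k => rfl
      simp [h2]
    · have hnx : (0:ℝ) < ‖x‖ := norm_pos_iff.mpr hx
      have hcx : ∀ k : Fin n, (c • x) k = c * x k := fun k => rfl
      have hncx : ‖c • x‖ = c * ‖x‖ := by
        rw [norm_smul, Real.norm_eq_abs, abs_of_pos hc0]
      have hsum : (∑ i, (c • x) i * M i) = c * ∑ i, x i * M i := by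
        rw [Finset.mul_sum]
        exact Finset.sum_congr rfl fun i _ => by rw [hcx i]; ring
      simp only [hf, Gs]
      rw [hsum, hncx]
      have harg1 : a * (c * ‖x‖) * t = a * ‖x‖ * s := by
        rw [hc, ← hss]; field_simp
      have harg2 : Γ₀ * (c * ‖x‖) ^ 2 * t = Γ₀ * ‖x‖ ^ 2 := by
        rw [hc, ← hss]; field_simp
      rw [harg1, harg2]
      have hcne : c ≠ 0 := ne_of_gt hc0
      have hxne : ‖x‖ ≠ 0 := ne_of_gt hnx
      field_simp
  have hsym := integral_dot_sq hn M (Gs a Γ₀ s) (fun i j => hint_lemma ha hΓ₀ i j)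
  have hrad : ∫ x : EuclideanSpace ℝ (Fin n), ‖x‖ ^ 2 * Gs a Γ₀ s ‖x‖
      = (1 / (2 * a ^ 2)) * (∫ x : EuclideanSpace ℝ (Fin n), Real.exp (-(2 * Γ₀ * ‖x‖ ^ 2)))
        - (1 / (2 * a ^ 2)) * ∫ x : EuclideanSpace ℝ (Fin n),
            Real.exp (-(2 * Γ₀ * ‖x‖ ^ 2)) * Real.cos (2 * a * ‖x‖ * s) := by
    have hg1 : Integrable (fun x : EuclideanSpace ℝ (Fin n) =>
        (1 / (2 * a ^ 2)) * Real.exp (-(2 * Γ₀ * ‖x‖ ^ 2))) :=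
      (gauss_integrable (by positivity : (0:ℝ) < 2 * Γ₀)).const_mul _
    have hg2 : Integrable (fun x : EuclideanSpace ℝ (Fin n) =>
        (1 / (2 * a ^ 2)) * (Real.exp (-(2 * Γ₀ * ‖x‖ ^ 2)) * Real.cos (2 * a * ‖x‖ * s))) := by
      refine Integrable.const_mul ?_ _
      refine Integrable.mono' (gauss_integrable (by positivity : (0:ℝ) < 2 * Γ₀)) ?_ ?_
      · apply Continuous.aestronglyMeasurable
        fun_prop
      · filter_upwards with x
        rw [Real.norm_eq_abs, abs_mul, abs_of_pos (Real.exp_pos _)]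
        calc Real.exp (-(2 * Γ₀ * ‖x‖ ^ 2)) * |Real.cos (2 * a * ‖x‖ * s)|
            ≤ Real.exp (-(2 * Γ₀ * ‖x‖ ^ 2)) * 1 := by
              gcongr
              exact Real.abs_cos_le_one _
          _ = Real.exp (-(2 * Γ₀ * ‖x‖ ^ 2)) := mul_one _
    have hcongr : ∀ᵐ x : EuclideanSpace ℝ (Fin n), ‖x‖ ^ 2 * Gs a Γ₀ s ‖x‖
        = (1 / (2 * a ^ 2)) * Real.exp (-(2 * Γ₀ * ‖x‖ ^ 2))
          - (1 / (2 * a ^ 2)) * (Real.exp (-(2 * Γ₀ * ‖x‖ ^ 2)) * Real.cos (2 * a * ‖x‖ * s)) := by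
      filter_upwards [hae] with x hx
      have hnx : ‖x‖ ≠ 0 := norm_ne_zero_iff.mpr hx
      rw [Gs]
      rw [show Real.exp (-(Γ₀ * ‖x‖ ^ 2)) ^ 2 = Real.exp (-(2 * Γ₀ * ‖x‖ ^ 2)) by
        rw [exp_sq]; congr 1; ring]
      rw [Real.sin_sq_eq_half_sub]
      rw [show 2 * (a * ‖x‖ * s) = 2 * a * ‖x‖ * s by ring]
      field_simp
    rw [integral_congr_ae hcongr, integral_sub hg1 hg2,
      integral_const_mul, integral_const_mul]
  rw [hI, hpow, ← hcv]
  rw [funext hpt, hsym, hrad]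

end Stmt13Aux

open Stmt13Aux in
/-- With `Ê₆(t,ξ) = −(ξ·M) sin(a|ξ|t)/(a|ξ|) e^{−Γ₀|ξ|²t}`, one has
`lim_{t→∞} t^{n/2} ∫ |Ê₆(t,ξ)|² dξ = (σ_{n−1}/(4na²)) (2Γ₀)^{−n/2} Γ(n/2) |M|²`, where
`σ_{n−1} = 2π^{n/2}/Γ(n/2)` is the surface measure of the unit sphere `S^{n−1} ⊂ ℝⁿ`.
In particular, if `M ≠ 0`, `∫ |Ê₆(t,ξ)|² dξ ≥ c t^{−n/2} |M|²` for large `t`. -/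
theorem stmt_13 (n : ℕ) (hn : 1 ≤ n) (a Γ₀ : ℝ) (ha : 0 < a) (hΓ₀ : 0 < Γ₀)
    (M : EuclideanSpace ℝ (Fin n))
    (E6 : ℝ → EuclideanSpace ℝ (Fin n) → ℝ)
    (hE6 : ∀ t : ℝ, ∀ ξ : EuclideanSpace ℝ (Fin n), ξ ≠ 0 →
      E6 t ξ = -(∑ i, ξ i * M i) * (Real.sin (a * ‖ξ‖ * t) / (a * ‖ξ‖))
          * Real.exp (-(Γ₀ * ‖ξ‖ ^ 2 * t))) :
    Filter.Tendsto (fun t : ℝ => t ^ ((n : ℝ) / 2) * ∫ ξ, (E6 t ξ) ^ 2)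
      Filter.atTop
      (nhds ((2 * Real.pi ^ ((n : ℝ) / 2) / Real.Gamma ((n : ℝ) / 2)) / (4 * n * a ^ 2)
        * (2 * Γ₀) ^ (-(n : ℝ) / 2) * Real.Gamma ((n : ℝ) / 2) * ‖M‖ ^ 2)) ∧
    (M ≠ 0 → ∃ c : ℝ, 0 < c ∧ ∃ t₀ : ℝ, 0 < t₀ ∧ ∀ t : ℝ, t₀ ≤ t →
      c * t ^ (-(n : ℝ) / 2) * ‖M‖ ^ 2 ≤ ∫ ξ, (E6 t ξ) ^ 2) := by
  have hn0 : (0 : ℝ) < n := by exact_mod_cast hn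
  set C₀ : ℝ := (π / (2 * Γ₀)) ^ ((n : ℝ) / 2) with hC0
  have hC0pos : 0 < C₀ := Real.rpow_pos_of_pos (by positivity) _
  set L : ℝ := ‖M‖ ^ 2 / n * (1 / (2 * a ^ 2) * C₀ - 1 / (2 * a ^ 2) * 0) with hLdef
  have hsq : Filter.Tendsto Real.sqrt Filter.atTop Filter.atTop := by
    apply Filter.tendsto_atTop_atTop.mpr
    intro b
    refine ⟨b ^ 2, fun x hx => ?_⟩
    calc b ≤ |b| := le_abs_self b
      _ = Real.sqrt (b ^ 2) := (Real.sqrt_sq_eq_abs b).symm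
      _ ≤ Real.sqrt x := Real.sqrt_le_sqrt hx
  have hosc : Filter.Tendsto (fun t : ℝ => ∫ x : EuclideanSpace ℝ (Fin n),
      Real.exp (-(2 * Γ₀ * ‖x‖ ^ 2)) * Real.cos (2 * a * ‖x‖ * Real.sqrt t))
      Filter.atTop (nhds 0) :=
    (osc hn hΓ₀ ha).comp hsq
  have hmodel : Filter.Tendsto (fun t : ℝ => ‖M‖ ^ 2 / n *
      (1 / (2 * a ^ 2) * C₀ - 1 / (2 * a ^ 2) * ∫ x : EuclideanSpace ℝ (Fin n),
        Real.exp (-(2 * Γ₀ * ‖x‖ ^ 2)) * Real.cos (2 * a * ‖x‖ * Real.sqrt t)))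
      Filter.atTop (nhds L) := by
    rw [hLdef]
    exact ((hosc.const_mul (1 / (2 * a ^ 2))).const_sub (1 / (2 * a ^ 2) * C₀)).const_mul _
  have hev : (fun t : ℝ => t ^ ((n : ℝ) / 2) * ∫ ξ, (E6 t ξ) ^ 2) =ᶠ[Filter.atTop]
      (fun t : ℝ => ‖M‖ ^ 2 / n *
      (1 / (2 * a ^ 2) * C₀ - 1 / (2 * a ^ 2) * ∫ x : EuclideanSpace ℝ (Fin n),
        Real.exp (-(2 * Γ₀ * ‖x‖ ^ 2)) * Real.cos (2 * a * ‖x‖ * Real.sqrt t))) := by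
    filter_upwards [Filter.eventually_gt_atTop (0 : ℝ)] with t ht
    rw [main_eq hn ha hΓ₀ M E6 hE6 t ht, gauss_value (by positivity : (0:ℝ) < 2 * Γ₀), ← hC0]
  have h1 : Filter.Tendsto (fun t : ℝ => t ^ ((n : ℝ) / 2) * ∫ ξ, (E6 t ξ) ^ 2)
      Filter.atTop (nhds L) := hmodel.congr' hev.symm
  have hGpos : 0 < Real.Gamma ((n : ℝ) / 2) := Real.Gamma_pos_of_pos (by positivity)
  have hTL : (2 * Real.pi ^ ((n : ℝ) / 2) / Real.Gamma ((n : ℝ) / 2)) / (4 * n * a ^ 2)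
      * (2 * Γ₀) ^ (-(n : ℝ) / 2) * Real.Gamma ((n : ℝ) / 2) * ‖M‖ ^ 2 = L := by
    rw [hLdef, hC0]
    rw [show (-(n : ℝ) / 2) = -((n : ℝ) / 2) from neg_div 2 (n : ℝ)]
    rw [Real.rpow_neg (by positivity : (0:ℝ) ≤ 2 * Γ₀)]
    rw [Real.div_rpow (le_of_lt Real.pi_pos) (by positivity : (0:ℝ) ≤ 2 * Γ₀)]
    have h2Γ : (0 : ℝ) < (2 * Γ₀) ^ ((n : ℝ) / 2) := Real.rpow_pos_of_pos (by positivity) _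
    field_simp
    ring
  constructor
  · rw [hTL]; exact h1
  · intro hM
    have hMpos : 0 < ‖M‖ := norm_pos_iff.mpr hM
    have hLpos : 0 < L := by
      have hL2 : L = ‖M‖ ^ 2 / n * (1 / (2 * a ^ 2) * C₀) := by rw [hLdef]; ring
      rw [hL2]
      positivity
    have h2 : ∀ᶠ t : ℝ in Filter.atTop, L / 2 ≤ t ^ ((n : ℝ) / 2) * ∫ ξ, (E6 t ξ) ^ 2 :=
      h1.eventually (eventually_ge_nhds (by linarith : L / 2 < L))
    obtain ⟨b, hb⟩ := Filter.eventually_atTop.mp (h2.and (Filter.eventually_ge_atTop (1 : ℝ)))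
    refine ⟨L / (2 * ‖M‖ ^ 2), by positivity, max b 1, lt_max_of_lt_right one_pos, ?_⟩
    intro t htt
    obtain ⟨hL2, ht1⟩ := hb t (le_trans (le_max_left b 1) htt)
    have ht0 : (0 : ℝ) < t := lt_of_lt_of_le one_pos ht1
    have hP : 0 < t ^ ((n : ℝ) / 2) := Real.rpow_pos_of_pos ht0 _
    rw [show (-(n : ℝ) / 2) = -((n : ℝ) / 2) from neg_div 2 (n : ℝ),
      Real.rpow_neg ht0.le]
    have heq : L / (2 * ‖M‖ ^ 2) * (t ^ ((n : ℝ) / 2))⁻¹ * ‖M‖ ^ 2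
        = (L / 2) / t ^ ((n : ℝ) / 2) := by
      field_simp
    rw [heq, div_le_iff₀ hP]
    nlinarith [hL2]
end

section
/- Let n ≥ 1, a > 0 and Γ > 0. Then lim_{t→∞} t^{n/2} ∫₀^∞ sin²(a r t) e^{−2Γ r² t} r^{n−1} dr = (1/4) (2Γ)^{−n/2} Γ(n/2), where Γ(·) on the right-hand side is the Gamma function. -/
open MeasureTheory Set Filter Real

-- integrability of the gaussian-moment integrand
lemma aux_int (b : ℝ) (hb : 0 < b) (n : ℕ) (hn : 1 ≤ n) :
    IntegrableOn (fun τ : ℝ => Real.exp (-(b * τ ^ 2)) * τ ^ (n - 1)) (Ioi 0) := by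
  have h := integrableOn_rpow_mul_exp_neg_mul_sq hb (s := (n : ℝ) - 1) (by
    have : (1:ℝ) ≤ n := by exact_mod_cast hn
    linarith)
  refine (h.congr_fun (fun x hx => ?_) measurableSet_Ioi)
  have hx0 : (0:ℝ) < x := hx
  rw [mul_comm]; beta_reduce; rw [neg_mul]
  congr 1
  rw [show ((n:ℝ) - 1) = ((n - 1 : ℕ) : ℝ) by
    push_cast [Nat.cast_sub hn]; ring]
  rw [Real.rpow_natCast]

lemma gauss_moment (b : ℝ) (hb : 0 < b) (n : ℕ) (hn : 1 ≤ n) :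
    ∫ τ in Ioi (0:ℝ), Real.exp (-(b * τ ^ 2)) * τ ^ (n - 1)
      = (1 / 2) * b ^ (-(n:ℝ) / 2) * Real.Gamma ((n : ℝ) / 2) := by
  have hn' : (0:ℝ) < (n:ℝ) / 2 := by positivity
  have hG := Real.integral_rpow_mul_exp_neg_mul_Ioi hn' hb
  have hsub := integral_comp_rpow_Ioi_of_pos
    (g := fun y : ℝ => y ^ ((n:ℝ) / 2 - 1) * Real.exp (-(b * y))) (p := 2) two_pos
  rw [hG] at hsub
  have key : (∫ x in Ioi (0:ℝ), (2 * x ^ ((2:ℝ) - 1)) •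
      ((x ^ (2:ℝ)) ^ ((n:ℝ) / 2 - 1) * Real.exp (-(b * x ^ (2:ℝ)))))
      = 2 * ∫ τ in Ioi (0:ℝ), Real.exp (-(b * τ ^ 2)) * τ ^ (n - 1) := by
    rw [← integral_const_mul]
    refine setIntegral_congr_fun measurableSet_Ioi (fun x hx => ?_)
    have hx0 : (0:ℝ) < x := hx
    have h2 : x ^ (2:ℝ) = x ^ 2 := by
      rw [← Real.rpow_natCast x 2]; norm_num
    rw [h2, smul_eq_mul]
    have hxp : (x ^ 2) ^ ((n:ℝ)/2 - 1) = x ^ ((n:ℝ) - 2) := by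
      rw [← Real.rpow_natCast x 2, ← Real.rpow_mul hx0.le]
      ring_nf
    have hnp : (x : ℝ) ^ (n - 1) = x ^ ((n:ℝ) - 1) := by
      rw [show ((n:ℝ) - 1) = ((n - 1 : ℕ) : ℝ) by push_cast [Nat.cast_sub hn]; ring,
        Real.rpow_natCast]
    rw [hxp, hnp]
    have h1 : (2:ℝ) - 1 = 1 := by norm_num
    rw [h1, Real.rpow_one]
    have hmm : x * x ^ ((n:ℝ) - 2) = x ^ ((n:ℝ) - 1) := by
      have h3 := Real.rpow_add hx0 1 ((n:ℝ) - 2)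
      rw [Real.rpow_one] at h3
      rw [← h3]
      congr 1
      ring
    rw [show (2 * x) * (x ^ ((n:ℝ) - 2) * Real.exp (-(b * x ^ 2)))
        = 2 * ((x * x ^ ((n:ℝ) - 2)) * Real.exp (-(b * x ^ 2))) by ring, hmm]
    ring
  rw [key] at hsub
  have heq : ∫ τ in Ioi (0:ℝ), Real.exp (-(b * τ ^ 2)) * τ ^ (n - 1)
      = (1/2) * ((1 / b) ^ ((n:ℝ)/2) * Real.Gamma ((n:ℝ)/2)) := by
    rw [← hsub]; ring
  have hpow : (1 / b) ^ ((n:ℝ)/2) = b ^ (-(n:ℝ)/2) := by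
    rw [one_div, Real.inv_rpow hb.le, ← Real.rpow_neg hb.le, neg_div]
  rw [heq, hpow]; ring

lemma rl_cos (g : ℝ → ℝ) (hg : Integrable g) :
    Tendsto (fun w : ℝ => ∫ x : ℝ, Real.cos (w * x) * g x) atTop (nhds 0) := by
  set G : ℝ → ℂ := fun x => (g x : ℂ) with hGdef
  have hG : Integrable G := hg.ofReal
  have h0 : Tendsto (fun w : ℝ => ∫ v : ℝ, Real.fourierChar (-(v * w)) • G v)
      (cocompact ℝ) (nhds 0) := Real.tendsto_integral_exp_smul_cocompact G
  have hmap : Tendsto (fun w : ℝ => w / (2 * π)) atTop (cocompact ℝ) := by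
    exact Tendsto.mono_right (tendsto_id.atTop_div_const (by positivity))
      (by rw [cocompact_eq_atBot_atTop]; exact le_sup_right)
  have h1 := h0.comp hmap
  have h2 := (Complex.continuous_re.tendsto 0).comp h1
  rw [Complex.zero_re] at h2
  refine h2.congr (fun w => ?_)
  have hint : Integrable (fun v : ℝ => Real.fourierChar (-(v * (w / (2 * π)))) • G v) :=
    (Real.fourierIntegral_convergent_iff' (ContinuousLinearMap.mul ℝ ℝ) (w / (2 * π))).2 hG
  calc (Complex.re ∘ fun w : ℝ => ∫ v : ℝ, Real.fourierChar (-(v * w)) • G v)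
        ((fun w : ℝ => w / (2 * π)) w)
      = ∫ v : ℝ, (Real.fourierChar (-(v * (w / (2 * π)))) • G v).re := by
        exact (integral_re hint).symm
    _ = ∫ x : ℝ, Real.cos (w * x) * g x := by
        refine integral_congr_ae (Eventually.of_forall (fun v => ?_))
        simp only [Circle.smul_def, Real.fourierChar_apply]
        have : (2 * π * -(v * (w / (2 * π)))) = -(w * v) := by
          field_simp
        rw [this, smul_eq_mul, Complex.mul_re, Complex.exp_ofReal_mul_I_re]
        simp [hGdef, Real.cos_neg, mul_comm]

/-- For `n ≥ 1`, `a > 0`, `Γ > 0`: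
`lim_{t→∞} t^{n/2} ∫₀^∞ sin²(a r t) e^{−2Γ r² t} r^{n−1} dr = (1/4) (2Γ)^{−n/2} Γ(n/2)`,
where `Γ(·)` on the right-hand side is the Gamma function. -/
theorem stmt_14 (n : ℕ) (hn : 1 ≤ n) (a Γ : ℝ) (ha : 0 < a) (hΓ : 0 < Γ) :
    Filter.Tendsto
      (fun t : ℝ => t ^ ((n : ℝ) / 2) *
        ∫ r in Set.Ioi (0 : ℝ),
          Real.sin (a * r * t) ^ 2 * Real.exp (-(2 * Γ * r ^ 2 * t)) * r ^ (n - 1))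
      Filter.atTop
      (nhds ((1 / 4) * (2 * Γ) ^ (-(n : ℝ) / 2) * Real.Gamma ((n : ℝ) / 2))) := by
  have h2Γ : (0:ℝ) < 2 * Γ := by linarith
  set E : ℝ → ℝ := fun τ => Real.exp (-(2 * Γ * τ ^ 2)) * τ ^ (n - 1) with hEdef
  have hE : IntegrableOn E (Ioi 0) := aux_int (2 * Γ) h2Γ n hn
  -- integrability of cos * E on Ioi 0
  have hcE : ∀ w : ℝ, IntegrableOn (fun τ => Real.cos (w * τ) * E τ) (Ioi 0) := by
    intro w
    refine Integrable.bdd_mul (c := 1) hE ?_ (Eventually.of_forall fun x => by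
      simpa using Real.abs_cos_le_one (w * x))
    exact (Real.continuous_cos.comp (continuous_const.mul continuous_id)).aestronglyMeasurable
  -- the indicator function and Riemann-Lebesgue
  set g : ℝ → ℝ := (Ioi (0:ℝ)).indicator E with hgdef
  have hg : Integrable g := hE.integrable_indicator measurableSet_Ioi
  have hcosg : ∀ w : ℝ, (∫ x : ℝ, Real.cos (w * x) * g x)
      = ∫ τ in Ioi (0:ℝ), Real.cos (w * τ) * E τ := by
    intro w
    rw [← integral_indicator measurableSet_Ioi]
    refine integral_congr_ae (Eventually.of_forall (fun x => ?_))
    by_cases hx : x ∈ Ioi (0:ℝ) <;>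
      simp [hgdef, Set.indicator_of_mem, Set.indicator_of_notMem, hx]
  have hsqrt : Tendsto Real.sqrt atTop atTop := by
    refine (tendsto_rpow_atTop (by norm_num : (0:ℝ) < 1/2)).congr' ?_
    filter_upwards [eventually_ge_atTop (0:ℝ)] with t _
    rw [Real.sqrt_eq_rpow]
  have hw : Tendsto (fun t : ℝ => 2 * a * Real.sqrt t) atTop atTop :=
    hsqrt.const_mul_atTop (by positivity)
  have hRL : Tendsto (fun t : ℝ => ∫ τ in Ioi (0:ℝ),
      Real.cos (2 * a * Real.sqrt t * τ) * E τ) atTop (nhds 0) := by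
    have := (rl_cos g hg).comp hw
    refine this.congr (fun t => ?_)
    exact hcosg (2 * a * Real.sqrt t)
  -- the substituted functional
  set Φ : ℝ → ℝ := fun t => ∫ τ in Ioi (0:ℝ),
      Real.sin (a * τ * Real.sqrt t) ^ 2 * E τ with hΦdef
  -- value of the Gaussian moment
  have hIE : ∫ τ in Ioi (0:ℝ), E τ
      = (1/2) * (2*Γ) ^ (-(n:ℝ)/2) * Real.Gamma ((n:ℝ)/2) := gauss_moment (2*Γ) h2Γ n hn
  -- splitting Φ
  have hsplit : ∀ t : ℝ, Φ t = (1/2) * ((1/2) * (2*Γ) ^ (-(n:ℝ)/2) * Real.Gamma ((n:ℝ)/2))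
      - (1/2) * ∫ τ in Ioi (0:ℝ), Real.cos (2 * a * Real.sqrt t * τ) * E τ := by
    intro t
    have heq : ∀ τ : ℝ, Real.sin (a * τ * Real.sqrt t) ^ 2 * E τ
        = (1/2) * E τ - (1/2) * (Real.cos (2 * a * Real.sqrt t * τ) * E τ) := by
      intro τ
      rw [Real.sin_sq_eq_half_sub]
      ring_nf
    rw [hΦdef]
    simp only [heq]
    rw [integral_sub ((hE.const_mul _)) ((hcE _).const_mul _), integral_const_mul,
      integral_const_mul, hIE]
  -- limit of Φ
  have hΦlim : Tendsto Φ atTop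
      (nhds ((1/4) * (2*Γ) ^ (-(n:ℝ)/2) * Real.Gamma ((n:ℝ)/2))) := by
    have h1 : Tendsto (fun t : ℝ => (1/2) * ((1/2) * (2*Γ) ^ (-(n:ℝ)/2) * Real.Gamma ((n:ℝ)/2))
        - (1/2) * ∫ τ in Ioi (0:ℝ), Real.cos (2 * a * Real.sqrt t * τ) * E τ) atTop
        (nhds ((1/2) * ((1/2) * (2*Γ) ^ (-(n:ℝ)/2) * Real.Gamma ((n:ℝ)/2)) - (1/2) * 0)) :=
      tendsto_const_nhds.sub (hRL.const_mul _)
    have h2 : (1/2) * ((1/2) * (2*Γ) ^ (-(n:ℝ)/2) * Real.Gamma ((n:ℝ)/2)) - (1/2) * 0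
        = (1/4) * (2*Γ) ^ (-(n:ℝ)/2) * Real.Gamma ((n:ℝ)/2) := by ring
    rw [h2] at h1
    exact h1.congr (fun t => (hsplit t).symm)
  -- eventual equality with the original expression
  refine hΦlim.congr' ?_
  filter_upwards [eventually_gt_atTop (0:ℝ)] with t ht
  have hs : 0 < Real.sqrt t := Real.sqrt_pos.mpr ht
  set s := Real.sqrt t with hsdef
  set c := s⁻¹ with hcdef
  have hc : 0 < c := inv_pos.mpr hs
  have hct : c * t = s := by
    rw [hcdef, hsdef]
    rw [inv_mul_eq_div, Real.div_sqrt]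
  have hc2t : c ^ 2 * t = 1 := by
    rw [hcdef, hsdef]
    rw [inv_pow, Real.sq_sqrt ht.le, inv_mul_cancel₀ ht.ne']
  have hsub := integral_comp_mul_left_Ioi
    (fun r => Real.sin (a * r * t) ^ 2 * Real.exp (-(2 * Γ * r ^ 2 * t)) * r ^ (n - 1))
    0 hc
  rw [mul_zero] at hsub
  have hptw : ∀ τ : ℝ, Real.sin (a * (c * τ) * t) ^ 2 *
      Real.exp (-(2 * Γ * (c * τ) ^ 2 * t)) * (c * τ) ^ (n - 1)
      = c ^ (n - 1) * (Real.sin (a * τ * s) ^ 2 * E τ) := by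
    intro τ
    have e1 : a * (c * τ) * t = a * τ * s := by rw [← hct]; ring
    have e2 : 2 * Γ * (c * τ) ^ 2 * t = 2 * Γ * τ ^ 2 := by
      rw [mul_pow]
      rw [show 2 * Γ * (c ^ 2 * τ ^ 2) * t = 2 * Γ * τ ^ 2 * (c ^ 2 * t) by ring, hc2t,
        mul_one]
    rw [e1, e2, mul_pow, hEdef]
    ring
  simp only [hptw] at hsub
  rw [integral_const_mul] at hsub
  -- hsub : c^(n-1) * Φ t = c⁻¹ • ∫ original
  have horig : (∫ r in Ioi (0:ℝ),
      Real.sin (a * r * t) ^ 2 * Real.exp (-(2 * Γ * r ^ 2 * t)) * r ^ (n - 1))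
      = c ^ n * Φ t := by
    have := hsub
    rw [smul_eq_mul] at this
    have h3 : c * (c ^ (n - 1) * Φ t) = c ^ n * Φ t := by
      rw [← mul_assoc, ← pow_succ' c (n-1), Nat.sub_add_cancel hn]
    calc (∫ r in Ioi (0:ℝ), Real.sin (a * r * t) ^ 2 *
          Real.exp (-(2 * Γ * r ^ 2 * t)) * r ^ (n - 1))
        = c * (c⁻¹ * ∫ r in Ioi (0:ℝ), Real.sin (a * r * t) ^ 2 *
          Real.exp (-(2 * Γ * r ^ 2 * t)) * r ^ (n - 1)) := by
          rw [← mul_assoc, mul_inv_cancel₀ hc.ne', one_mul]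
      _ = c * (c ^ (n - 1) * Φ t) := by rw [← this, hΦdef]
      _ = c ^ n * Φ t := h3
  rw [horig, ← mul_assoc]
  have hfac : t ^ ((n:ℝ)/2) * c ^ n = 1 := by
    rw [hcdef, hsdef, inv_pow, Real.sqrt_eq_rpow, ← Real.rpow_natCast (t ^ ((1:ℝ)/2)) n,
      ← Real.rpow_mul ht.le]
    rw [← Real.rpow_neg ht.le, ← Real.rpow_add ht]
    rw [show (n:ℝ)/2 + -(1/2 * n) = 0 by ring, Real.rpow_zero]
  rw [hfac, one_mul]
end

section
/- Let c₀, D be positive reals and γ > 1. For r > 0 consider the inviscid characteristic cubic R_r(ζ) := ζ³ + γ D r² ζ² + γ c₀² r² ζ + γ D c₀² r⁴. Then: (i) there exist ε₀ ∈ (0,1), C > 0 and functions ζ₁, ζ₂, ζ₃ : (0, ε₀) → ℂ whose values are exactly the three roots of R_r and which satisfy, for all r ∈ (0, ε₀), | ζ₁(r) + D r² | ≤ C r⁴, | ζ₂(r) + i√γ c₀ r + ((γ−1)D/2) r² | ≤ C r³, | ζ₃(r) − i√γ c₀ r + ((γ−1)D/2) r² | ≤ C r³; and (ii) there exist N₀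 ≥ 1, C' > 0 and functions ζ₁, ζ₂, ζ₃ : [N₀, ∞) → ℂ whose values are exactly the three roots of R_r and which satisfy, for all r ≥ N₀, | ζ₁(r) + γ D r² | ≤ C', | ζ₂(r) + i c₀ r + (γ−1)c₀²/(2γD) | ≤ C' r^{−1}, | ζ₃(r) − i c₀ r + (γ−1)c₀²/(2γD) | ≤ C' r^{−1}. -/
set_option maxHeartbeats 1000000

lemma cubic_factor (a b c x s : ℝ)
    (hroot : x ^ 3 + a * x ^ 2 + b * x + c = 0)
    (hs : s ^ 2 = (b + x * (a + x)) - (a + x) ^ 2 / 4) (z : ℂ) :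
    z ^ 3 + (a : ℂ) * z ^ 2 + (b : ℂ) * z + (c : ℂ)
      = (z - (x : ℂ)) * (z - (((-((a + x) / 2)) : ℝ) - Complex.I * ((s : ℝ) : ℂ)))
          * (z - (((-((a + x) / 2)) : ℝ) + Complex.I * ((s : ℝ) : ℂ))) := by
  have hrootC : (x:ℂ) ^ 3 + (a:ℂ) * (x:ℂ) ^ 2 + (b:ℂ) * (x:ℂ) + (c:ℂ) = 0 := by
    exact_mod_cast hroot
  have hsC : (s:ℂ) ^ 2 = ((b:ℂ) + (x:ℂ) * ((a:ℂ) + (x:ℂ))) - ((a:ℂ) + (x:ℂ)) ^ 2 / 4 := by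
    exact_mod_cast hs
  have hI : (Complex.I) ^ 2 = -1 := Complex.I_sq
  push_cast
  linear_combination hrootC - (z - (x:ℂ)) * hsC + ((z - (x:ℂ)) * (s:ℂ)^2) * hI

lemma sqrt_close (t m : ℝ) (ht : 0 ≤ t) (hm : 0 < m) :
    |Real.sqrt t - m| ≤ |t - m ^ 2| / m := by
  have hs : Real.sqrt t ^ 2 = t := Real.sq_sqrt ht
  have hnn : (0:ℝ) ≤ Real.sqrt t := Real.sqrt_nonneg t
  have h1 : (Real.sqrt t - m) * (Real.sqrt t + m) = t - m ^ 2 := by nlinarith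
  rw [le_div_iff₀ hm]
  have h2 : |Real.sqrt t - m| * (Real.sqrt t + m) = |t - m ^ 2| := by
    rw [← h1, abs_mul, abs_of_nonneg (by linarith : (0:ℝ) ≤ Real.sqrt t + m)]
  nlinarith [abs_nonneg (Real.sqrt t - m)]

lemma norm_re_im (x y : ℝ) : ‖(x:ℂ) + Complex.I * (y:ℝ)‖ ≤ |x| + |y| := by
  calc ‖(x:ℂ) + Complex.I * (y:ℝ)‖ ≤ ‖(x:ℂ)‖ + ‖Complex.I * ((y:ℝ):ℂ)‖ := norm_add_le _ _
  _ = |x| + |y| := by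
      rw [norm_mul, Complex.norm_real, Complex.norm_I, Complex.norm_real, one_mul,
        Real.norm_eq_abs, Real.norm_eq_abs]

lemma exists_root (f : ℝ → ℝ) (hf : Continuous f) (α β : ℝ) (hab : α ≤ β)
    (h1 : f α ≤ 0) (h2 : 0 ≤ f β) : ∃ x, x ∈ Set.Icc α β ∧ f x = 0 := by
  have h := intermediate_value_Icc hab hf.continuousOn
  obtain ⟨x, hx, hfx⟩ := h ⟨h1, h2⟩
  exact ⟨x, hx, hfx⟩



/-- The inviscid characteristic cubic `R_r(ζ) = ζ³ + γD r² ζ² + γc₀² r² ζ + γDc₀² r⁴`. -/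
noncomputable def invCubic (c₀ D γ r : ℝ) (z : ℂ) : ℂ :=
  z ^ 3 + ((γ * D * r ^ 2 : ℝ) : ℂ) * z ^ 2
    + ((γ * c₀ ^ 2 * r ^ 2 : ℝ) : ℂ) * z + ((γ * D * c₀ ^ 2 * r ^ 4 : ℝ) : ℂ)

lemma small_part (c₀ D γ : ℝ) (hc₀ : 0 < c₀) (hD : 0 < D) (hγ : 1 < γ) :
    ∃ ε₀ : ℝ, 0 < ε₀ ∧ ε₀ < 1 ∧ ∃ C : ℝ, 0 < C ∧ ∃ z1 z2 z3 : ℝ → ℂ,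
      ∀ r : ℝ, 0 < r → r < ε₀ →
        (∀ z : ℂ, invCubic c₀ D γ r z = (z - z1 r) * (z - z2 r) * (z - z3 r)) ∧
        ‖z1 r + ((D * r ^ 2 : ℝ) : ℂ)‖ ≤ C * r ^ 4 ∧
        ‖z2 r + Complex.I * ((Real.sqrt γ * c₀ * r : ℝ) : ℂ)
            + (((γ - 1) * D / 2 * r ^ 2 : ℝ) : ℂ)‖ ≤ C * r ^ 3 ∧
        ‖z3 r - Complex.I * ((Real.sqrt γ * c₀ * r : ℝ) : ℂ)
            + (((γ - 1) * D / 2 * r ^ 2 : ℝ) : ℂ)‖ ≤ C * r ^ 3 := by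
  have hγ1 : (0:ℝ) < γ - 1 := by linarith
  have hγ0 : (0:ℝ) < γ := by linarith
  obtain ⟨K, hK0, hK⟩ : ∃ K : ℝ, 0 < K ∧ γ * c₀ ^ 2 * K = 2 * (γ - 1) * D ^ 3 :=
    ⟨2 * (γ - 1) * D ^ 3 / (γ * c₀ ^ 2), by positivity, by field_simp⟩
  obtain ⟨M, hM0, hMdef⟩ : ∃ M : ℝ, 0 < M ∧ M = (2*γ+3)*D^2*K + (γ+3)*D*K^2 + K^3 :=
    ⟨_, by positivity, rfl⟩
  obtain ⟨A, hA0, hAdef⟩ : ∃ A : ℝ, 0 < A ∧ A = (D+K)*((γ-1)*D+K) :=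
    ⟨_, by positivity, rfl⟩
  obtain ⟨B, hB0, hBdef⟩ : ∃ B : ℝ, 0 < B ∧ B = ((γ-1)*D+K)^2/4 :=
    ⟨_, by positivity, rfl⟩
  obtain ⟨ε₀, hε0, hεhalf, hεM', hεAB'⟩ :
      ∃ e : ℝ, 0 < e ∧ e ≤ 1/2 ∧ e*(2*M) ≤ (γ-1)*D^3 ∧ e*(2*(A+B)+2) ≤ γ*c₀^2 := by
    refine ⟨min (1/2) (min ((γ-1)*D^3/(2*M)) (γ*c₀^2/(2*(A+B)+2))),
      lt_min (by norm_num) (lt_min (by positivity) (by positivity)), min_le_left _ _, ?_, ?_⟩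
    · rw [← le_div_iff₀ (by positivity)]
      exact le_trans (min_le_right _ _) (min_le_left _ _)
    · rw [← le_div_iff₀ (by positivity)]
      exact le_trans (min_le_right _ _) (min_le_right _ _)
  have hε1 : ε₀ < 1 := by linarith
  -- existence of the real root
  have hex : ∀ r : ℝ, 0 < r → r < ε₀ →
      ∃ x : ℝ, (-(D*r^2) - K*r^4 ≤ x ∧ x ≤ -(D*r^2)) ∧
        x ^ 3 + γ * D * r ^ 2 * x ^ 2 + γ * c₀ ^ 2 * r ^ 2 * x + γ * D * c₀ ^ 2 * r ^ 4 = 0 := by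
    intro r hr0 hr1
    have hr_le : r ≤ 1 := by linarith
    have hr21 : r^2 ≤ 1 := by nlinarith
    have hr2ε : r^2 ≤ ε₀ := by nlinarith
    have hcont : Continuous (fun t : ℝ =>
        t ^ 3 + γ * D * r ^ 2 * t ^ 2 + γ * c₀ ^ 2 * r ^ 2 * t + γ * D * c₀ ^ 2 * r ^ 4) := by
      fun_prop
    have hfR : (-(D*r^2)) ^ 3 + γ * D * r ^ 2 * (-(D*r^2)) ^ 2 + γ * c₀ ^ 2 * r ^ 2 * (-(D*r^2))
        + γ * D * c₀ ^ 2 * r ^ 4 = (γ-1)*D^3*r^6 := by ring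
    have hidL : (-(D*r^2) - K*r^4) ^ 3 + γ * D * r ^ 2 * (-(D*r^2) - K*r^4) ^ 2
        + γ * c₀ ^ 2 * r ^ 2 * (-(D*r^2) - K*r^4) + γ * D * c₀ ^ 2 * r ^ 4
        = r^6 * (((γ-1)*D^3 - γ*c₀^2*K) + (((2*γ-3)*D^2*K) + ((γ-3)*D*K^2)*r^2 - K^3*r^4) * r^2) := by
      ring
    have hc6 : (γ-1)*D^3 - γ*c₀^2*K = -((γ-1)*D^3) := by linear_combination -hK
    have t1 : (γ-3)*D*K^2*r^2 ≤ (γ+3)*D*K^2 := by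
      rcases le_total γ 3 with h | h
      · nlinarith [mul_nonneg (mul_nonneg hD.le (sq_nonneg K)) (sq_nonneg r),
          mul_nonneg hD.le (sq_nonneg K)]
      · nlinarith [mul_nonneg (mul_nonneg (by linarith : (0:ℝ) ≤ γ-3)
          (mul_nonneg hD.le (sq_nonneg K))) (by linarith : (0:ℝ) ≤ 1 - r^2),
          mul_nonneg hD.le (sq_nonneg K)]
    have hrb : (((2*γ-3)*D^2*K) + ((γ-3)*D*K^2)*r^2 - K^3*r^4) ≤ M := by
      nlinarith [t1, pow_pos hK0 3, mul_pos (pow_pos hD 2) hK0, pow_pos hr0 4,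
        mul_nonneg (pow_pos hK0 3).le (pow_pos hr0 4).le]
    have hfL : (-(D*r^2) - K*r^4) ^ 3 + γ * D * r ^ 2 * (-(D*r^2) - K*r^4) ^ 2
        + γ * c₀ ^ 2 * r ^ 2 * (-(D*r^2) - K*r^4) + γ * D * c₀ ^ 2 * r ^ 4 ≤ 0 := by
      rw [hidL, hc6]
      have h6 : (0:ℝ) < r^6 := by positivity
      have hMr : (((2*γ-3)*D^2*K) + ((γ-3)*D*K^2)*r^2 - K^3*r^4) * r^2 ≤ M * ε₀ := by
        have h1 : (((2*γ-3)*D^2*K) + ((γ-3)*D*K^2)*r^2 - K^3*r^4) * r^2 ≤ M * r^2 := by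
          nlinarith [sq_nonneg r, hrb]
        nlinarith [hM0, hr2ε]
      have h2 : -((γ-1)*D^3) + (((2*γ-3)*D^2*K) + ((γ-3)*D*K^2)*r^2 - K^3*r^4) * r^2 ≤ 0 := by
        nlinarith [mul_pos hM0 hε0]
      nlinarith [h6, h2]
    obtain ⟨x, hx, hfx⟩ := exists_root _ hcont (-(D*r^2) - K*r^4) (-(D*r^2))
      (by nlinarith [pow_pos hr0 4]) hfL (by rw [hfR]; positivity)
    exact ⟨x, ⟨hx.1, hx.2⟩, hfx⟩
  choose! x hx using hex
  obtain ⟨C, hC0, hCdef⟩ : ∃ C : ℝ, 0 < C ∧ C = K + (A+B)/(Real.sqrt γ * c₀) + 1 :=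
    ⟨_, by positivity, rfl⟩
  refine ⟨ε₀, hε0, hε1, C, hC0, (fun r => ((x r : ℝ) : ℂ)),
    (fun r => (((-((γ * D * r ^ 2 + x r) / 2)) : ℝ) : ℂ) - Complex.I *
      ((Real.sqrt (γ * c₀ ^ 2 * r ^ 2 + x r * (γ * D * r ^ 2 + x r)
        - (γ * D * r ^ 2 + x r) ^ 2 / 4) : ℝ) : ℂ)),
    (fun r => (((-((γ * D * r ^ 2 + x r) / 2)) : ℝ) : ℂ) + Complex.I *
      ((Real.sqrt (γ * c₀ ^ 2 * r ^ 2 + x r * (γ * D * r ^ 2 + x r)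
        - (γ * D * r ^ 2 + x r) ^ 2 / 4) : ℝ) : ℂ)), ?_⟩
  intro r hr0 hr1
  obtain ⟨⟨hxl, hxr⟩, hxroot⟩ := hx r hr0 hr1
  have hr_le : r ≤ 1 := by linarith
  have hrr : r * r ≤ r * 1 := mul_le_mul_of_nonneg_left hr_le hr0.le
  have hr21 : r^2 ≤ 1 := by linarith only [hrr, hr_le]
  have hr2ε : r^2 ≤ ε₀ := by linarith only [hrr, hr1, hr0]
  have hKr4 : (0:ℝ) ≤ K*r^4 := by positivity
  have hK4 : K*r^4 ≤ K*r^2 := by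
    have h := mul_le_mul_of_nonneg_left hr21 (mul_nonneg hK0.le (sq_nonneg r))
    linarith only [h]
  have he : |x r + D*r^2| ≤ K*r^4 := by
    rw [abs_le]; constructor
    · linarith only [hxl]
    · linarith only [hxr, hKr4]
  have hDr2 : (0:ℝ) ≤ D*r^2 := by positivity
  have hKr2 : (0:ℝ) ≤ K*r^2 := by positivity
  have hγ1Dr2 : (0:ℝ) ≤ (γ-1)*D*r^2 := by positivity
  have hxb : |x r| ≤ (D+K)*r^2 := by
    rw [abs_le]; constructor
    · linarith only [hxl, hK4]
    · linarith only [hxr, hDr2, hKr2]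
  have hpb : |γ * D * r ^ 2 + x r| ≤ ((γ-1)*D+K)*r^2 := by
    rw [abs_le]; constructor
    · linarith only [hxl, hK4, hγ1Dr2]
    · linarith only [hxr, hKr2]
  have hs2diff : |(γ * c₀ ^ 2 * r ^ 2 + x r * (γ * D * r ^ 2 + x r)
      - (γ * D * r ^ 2 + x r) ^ 2 / 4) - γ * c₀ ^ 2 * r ^ 2| ≤ (A+B)*r^4 := by
    have h1 : |x r * (γ * D * r ^ 2 + x r)| ≤ A * r^4 := by
      rw [abs_mul]
      calc |x r| * |γ * D * r ^ 2 + x r| ≤ ((D+K)*r^2) * (((γ-1)*D+K)*r^2) :=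
        mul_le_mul hxb hpb (abs_nonneg _) (by positivity)
      _ = A * r^4 := by rw [hAdef]; ring
    have h2 : (γ * D * r ^ 2 + x r) ^ 2 / 4 ≤ B * r^4 := by
      have h3 : |γ * D * r ^ 2 + x r|^2 ≤ (((γ-1)*D+K)*r^2)^2 :=
        pow_le_pow_left₀ (abs_nonneg _) hpb 2
      rw [sq_abs] at h3
      rw [hBdef]; linarith only [h3]
    have h4 := abs_le.mp h1
    have hBr4 : (0:ℝ) ≤ B*r^4 := by positivity
    rw [abs_le]; constructor
    · linarith only [h4.1, h2]
    · linarith only [h4.2, hBr4, sq_nonneg (γ * D * r ^ 2 + x r)]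
  have h4 := abs_le.mp hs2diff
  have hs2nn : 0 ≤ γ * c₀ ^ 2 * r ^ 2 + x r * (γ * D * r ^ 2 + x r)
      - (γ * D * r ^ 2 + x r) ^ 2 / 4 := by
    have hABr : (A+B)*r^2*r^2 ≤ (A+B)*ε₀*r^2 := by
      have h := mul_le_mul_of_nonneg_right
        (mul_le_mul_of_nonneg_left hr2ε (by linarith : (0:ℝ) ≤ A+B)) (sq_nonneg r)
      linarith only [h]
    have h5 := mul_le_mul_of_nonneg_right hεAB' (sq_nonneg r)
    linarith only [h4.1, hABr, h5, mul_nonneg hε0.le (sq_nonneg r),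
      mul_nonneg (mul_nonneg hγ0.le (sq_nonneg c₀)) (sq_nonneg r)]
  have hsq : Real.sqrt (γ * c₀ ^ 2 * r ^ 2 + x r * (γ * D * r ^ 2 + x r)
      - (γ * D * r ^ 2 + x r) ^ 2 / 4) ^ 2
      = γ * c₀ ^ 2 * r ^ 2 + x r * (γ * D * r ^ 2 + x r)
      - (γ * D * r ^ 2 + x r) ^ 2 / 4 := Real.sq_sqrt hs2nn
  have hsγ : Real.sqrt γ ^ 2 = γ := Real.sq_sqrt hγ0.le
  have hsγ0 : 0 < Real.sqrt γ := Real.sqrt_pos.mpr hγ0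
  have hm0 : 0 < Real.sqrt γ * c₀ * r := by positivity
  have hsm : |Real.sqrt (γ * c₀ ^ 2 * r ^ 2 + x r * (γ * D * r ^ 2 + x r)
      - (γ * D * r ^ 2 + x r) ^ 2 / 4) - Real.sqrt γ * c₀ * r|
      ≤ ((A+B)/(Real.sqrt γ * c₀)) * r^3 := by
    have hm2 : (Real.sqrt γ * c₀ * r) ^ 2 = γ * c₀ ^ 2 * r ^ 2 := by
      linear_combination (c₀^2*r^2) * hsγ
    have h1 := sqrt_close _ _ hs2nn hm0
    rw [hm2] at h1
    have h2 : |γ * c₀ ^ 2 * r ^ 2 + x r * (γ * D * r ^ 2 + x r)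
        - (γ * D * r ^ 2 + x r) ^ 2 / 4 - γ * c₀ ^ 2 * r ^ 2| / (Real.sqrt γ * c₀ * r)
        ≤ ((A+B)*r^4) / (Real.sqrt γ * c₀ * r) :=
      div_le_div_of_nonneg_right hs2diff hm0.le
    have h3 : ((A+B)*r^4) / (Real.sqrt γ * c₀ * r) = ((A+B)/(Real.sqrt γ * c₀)) * r^3 := by
      field_simp
    rw [h3] at h2
    exact le_trans h1 h2
  refine ⟨?_, ?_, ?_, ?_⟩
  · intro z
    rw [invCubic]
    exact cubic_factor (γ * D * r ^ 2) (γ * c₀ ^ 2 * r ^ 2) (γ * D * c₀ ^ 2 * r ^ 4)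
      (x r) _ hxroot hsq z
  · have hcast : ((x r : ℝ) : ℂ) + ((D * r ^ 2 : ℝ) : ℂ) = ((x r + D * r ^ 2 : ℝ) : ℂ) := by
      push_cast; ring
    rw [hcast, Complex.norm_real, Real.norm_eq_abs]
    have hCK : K * r ^ 4 ≤ C * r ^ 4 := by
      rw [hCdef]
      have h : (0:ℝ) ≤ ((A+B)/(Real.sqrt γ * c₀) + 1) * r^4 := by positivity
      linarith only [h]
    linarith only [he, hCK]
  · have hcast : (((-((γ * D * r ^ 2 + x r) / 2)) : ℝ) : ℂ) - Complex.I *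
        ((Real.sqrt (γ * c₀ ^ 2 * r ^ 2 + x r * (γ * D * r ^ 2 + x r)
          - (γ * D * r ^ 2 + x r) ^ 2 / 4) : ℝ) : ℂ)
        + Complex.I * ((Real.sqrt γ * c₀ * r : ℝ) : ℂ)
        + (((γ - 1) * D / 2 * r ^ 2 : ℝ) : ℂ)
        = ((-((γ * D * r ^ 2 + x r) / 2) + (γ - 1) * D / 2 * r ^ 2 : ℝ) : ℂ)
          + Complex.I * ((Real.sqrt γ * c₀ * r - Real.sqrt (γ * c₀ ^ 2 * r ^ 2
            + x r * (γ * D * r ^ 2 + x r) - (γ * D * r ^ 2 + x r) ^ 2 / 4) : ℝ) : ℂ) := by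
      push_cast; ring
    rw [hcast]
    refine le_trans (norm_re_im _ _) ?_
    have h5 : |(-((γ * D * r ^ 2 + x r) / 2) + (γ - 1) * D / 2 * r ^ 2)| ≤ K*r^4/2 := by
      have : (-((γ * D * r ^ 2 + x r) / 2) + (γ - 1) * D / 2 * r ^ 2) = -((x r + D*r^2)/2) := by
        ring
      rw [this, abs_neg, abs_div]
      have : |(2:ℝ)| = 2 := by norm_num
      rw [this]
      linarith [he]
    have h6 := abs_sub_comm (Real.sqrt (γ * c₀ ^ 2 * r ^ 2 + x r * (γ * D * r ^ 2 + x r)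
        - (γ * D * r ^ 2 + x r) ^ 2 / 4)) (Real.sqrt γ * c₀ * r)
    have h7 : |Real.sqrt γ * c₀ * r - Real.sqrt (γ * c₀ ^ 2 * r ^ 2
        + x r * (γ * D * r ^ 2 + x r) - (γ * D * r ^ 2 + x r) ^ 2 / 4)|
        ≤ ((A+B)/(Real.sqrt γ * c₀)) * r^3 := by rw [abs_sub_comm]; exact hsm
    have h8 : K*r^4/2 ≤ K*r^3 := by
      have h := mul_nonneg (mul_nonneg hK0.le (pow_pos hr0 3).le)
        (by linarith only [hr_le] : (0:ℝ) ≤ 1 - r)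
      linarith only [h, hKr4]
    have h9 : ((A+B)/(Real.sqrt γ * c₀)) * r^3 + K*r^3 ≤ C * r^3 := by
      rw [hCdef]; linarith only [pow_pos hr0 3]
    linarith only [h5, h7, h8, h9]
  · have hcast : (((-((γ * D * r ^ 2 + x r) / 2)) : ℝ) : ℂ) + Complex.I *
        ((Real.sqrt (γ * c₀ ^ 2 * r ^ 2 + x r * (γ * D * r ^ 2 + x r)
          - (γ * D * r ^ 2 + x r) ^ 2 / 4) : ℝ) : ℂ)
        - Complex.I * ((Real.sqrt γ * c₀ * r : ℝ) : ℂ)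
        + (((γ - 1) * D / 2 * r ^ 2 : ℝ) : ℂ)
        = ((-((γ * D * r ^ 2 + x r) / 2) + (γ - 1) * D / 2 * r ^ 2 : ℝ) : ℂ)
          + Complex.I * ((Real.sqrt (γ * c₀ ^ 2 * r ^ 2
            + x r * (γ * D * r ^ 2 + x r) - (γ * D * r ^ 2 + x r) ^ 2 / 4)
            - Real.sqrt γ * c₀ * r : ℝ) : ℂ) := by
      push_cast; ring
    rw [hcast]
    refine le_trans (norm_re_im _ _) ?_
    have h5 : |(-((γ * D * r ^ 2 + x r) / 2) + (γ - 1) * D / 2 * r ^ 2)| ≤ K*r^4/2 := by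
      have : (-((γ * D * r ^ 2 + x r) / 2) + (γ - 1) * D / 2 * r ^ 2) = -((x r + D*r^2)/2) := by
        ring
      rw [this, abs_neg, abs_div]
      have : |(2:ℝ)| = 2 := by norm_num
      rw [this]
      linarith [he]
    have h8 : K*r^4/2 ≤ K*r^3 := by
      have h := mul_nonneg (mul_nonneg hK0.le (pow_pos hr0 3).le)
        (by linarith only [hr_le] : (0:ℝ) ≤ 1 - r)
      linarith only [h, hKr4]
    have h9 : ((A+B)/(Real.sqrt γ * c₀)) * r^3 + K*r^3 ≤ C * r^3 := by
      rw [hCdef]; linarith only [pow_pos hr0 3]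
    linarith only [h5, hsm, h8, h9]


lemma large_part (c₀ D γ : ℝ) (hc₀ : 0 < c₀) (hD : 0 < D) (hγ : 1 < γ) :
    ∃ N₀ : ℝ, 1 ≤ N₀ ∧ ∃ C' : ℝ, 0 < C' ∧ ∃ z1 z2 z3 : ℝ → ℂ,
      ∀ r : ℝ, N₀ ≤ r →
        (∀ z : ℂ, invCubic c₀ D γ r z = (z - z1 r) * (z - z2 r) * (z - z3 r)) ∧
        ‖z1 r + ((γ * D * r ^ 2 : ℝ) : ℂ)‖ ≤ C' ∧
        ‖z2 r + Complex.I * ((c₀ * r : ℝ) : ℂ)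
            + (((γ - 1) * c₀ ^ 2 / (2 * γ * D) : ℝ) : ℂ)‖ ≤ C' * r⁻¹ ∧
        ‖z3 r - Complex.I * ((c₀ * r : ℝ) : ℂ)
            + (((γ - 1) * c₀ ^ 2 / (2 * γ * D) : ℝ) : ℂ)‖ ≤ C' * r⁻¹ := by
  have hγ1 : (0:ℝ) < γ - 1 := by linarith
  have hγ0 : (0:ℝ) < γ := by linarith
  obtain ⟨u₀, hu₀0, hu₀⟩ : ∃ u₀ : ℝ, 0 < u₀ ∧ γ * D * u₀ = (γ - 1) * c₀ ^ 2 :=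
    ⟨(γ - 1) * c₀ ^ 2 / (γ * D), by positivity, by field_simp⟩
  obtain ⟨K', hK'0, hK'⟩ : ∃ K' : ℝ, 0 < K' ∧
      γ^2 * D^2 * K' = (u₀+1)*γ*c₀^2 + 2*γ*D*(u₀+1)^2 + (u₀+1)^3 + 1 :=
    ⟨((u₀+1)*γ*c₀^2 + 2*γ*D*(u₀+1)^2 + (u₀+1)^3 + 1)/(γ^2*D^2), by positivity, by field_simp⟩
  obtain ⟨M', hM'0, hM'def⟩ : ∃ M' : ℝ, 0 < M' ∧ M' = γ*D*K' + (u₀+1)^2 + (u₀+1)^2/4 :=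
    ⟨_, by positivity, rfl⟩
  have hdivM : (0:ℝ) ≤ (M'+1)/c₀^2 := div_nonneg (by linarith) (sq_nonneg c₀)
  obtain ⟨N₀, hN1, hNK, hNM⟩ : ∃ N : ℝ, 1 ≤ N ∧ K' ≤ N ∧ (M'+1)/c₀^2 ≤ N :=
    ⟨1 + K' + (M'+1)/c₀^2, by linarith, by linarith, by linarith⟩
  have hhalf : (γ - 1) * c₀ ^ 2 / (2 * γ * D) = u₀ / 2 := by
    rw [div_eq_iff (by positivity : (2*γ*D) ≠ 0)]
    linear_combination -hu₀
  -- root existence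
  have hex : ∀ r : ℝ, N₀ ≤ r →
      ∃ x : ℝ, (-(γ*D*r^2) + u₀ - K'/r^2 ≤ x ∧ x ≤ -(γ*D*r^2) + u₀ + K'/r^2) ∧
        x ^ 3 + γ * D * r ^ 2 * x ^ 2 + γ * c₀ ^ 2 * r ^ 2 * x + γ * D * c₀ ^ 2 * r ^ 4 = 0 := by
    intro r hrN
    have hr1 : 1 ≤ r := le_trans hN1 hrN
    have hr0 : 0 < r := by linarith
    have hr2 : r ≤ r^2 := by nlinarith
    have hKr2 : K' ≤ r^2 := by linarith [hNK, hrN, hr2]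
    have hE1 : K'/r^2 ≤ 1 := by rw [div_le_one (by positivity)]; exact hKr2
    have hE0 : 0 ≤ K'/r^2 := by positivity
    have hcont : Continuous (fun t : ℝ =>
        t ^ 3 + γ * D * r ^ 2 * t ^ 2 + γ * c₀ ^ 2 * r ^ 2 * t + γ * D * c₀ ^ 2 * r ^ 4) := by
      fun_prop
    have hid : ∀ e : ℝ, (-(γ*D*r^2) + u₀ + e) ^ 3 + γ * D * r ^ 2 * (-(γ*D*r^2) + u₀ + e) ^ 2
        + γ * c₀ ^ 2 * r ^ 2 * (-(γ*D*r^2) + u₀ + e) + γ * D * c₀ ^ 2 * r ^ 4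
        = γ^2*D^2*e*r^4 + (u₀+e)*γ*c₀^2*r^2 - 2*γ*D*r^2*(u₀+e)^2 + (u₀+e)^3 := by
      intro e
      linear_combination (γ*D*r^4) * hu₀
    have hEeq : γ^2*D^2*(K'/r^2)*r^4 = γ^2*D^2*K'*r^2 := by
      field_simp
    have hr21 : 1 ≤ r^2 := by nlinarith
    -- right endpoint : value ≥ 0
    have hfR : 0 ≤ (-(γ*D*r^2) + u₀ + K'/r^2) ^ 3
        + γ * D * r ^ 2 * (-(γ*D*r^2) + u₀ + K'/r^2) ^ 2
        + γ * c₀ ^ 2 * r ^ 2 * (-(γ*D*r^2) + u₀ + K'/r^2) + γ * D * c₀ ^ 2 * r ^ 4 := by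
      rw [hid (K'/r^2), hEeq]
      have h1 : (u₀+K'/r^2)^2 ≤ (u₀+1)^2 := by nlinarith
      have h2 : (0:ℝ) ≤ u₀ + K'/r^2 := by positivity
      have h3 : 2*γ*D*r^2*(u₀+K'/r^2)^2 ≤ 2*γ*D*r^2*(u₀+1)^2 := by
        have := mul_le_mul_of_nonneg_left h1 (by positivity : (0:ℝ) ≤ 2*γ*D*r^2)
        linarith only [this]
      have h4 : 2*γ*D*(u₀+1)^2*r^2 ≤ γ^2*D^2*K'*r^2 := by
        have hu₀1 : (0:ℝ) < u₀ + 1 := by linarith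
        have h5 : 2*γ*D*(u₀+1)^2 ≤ γ^2*D^2*K' := by
          have ha : (0:ℝ) < (u₀+1)*γ*c₀^2 := by positivity
          have hb : (0:ℝ) < (u₀+1)^3 := by positivity
          linarith only [hK', ha, hb]
        have := mul_le_mul_of_nonneg_right h5 (sq_nonneg r)
        linarith only [this]
      have h6 : (0:ℝ) ≤ (u₀+K'/r^2)*γ*c₀^2*r^2 := by positivity
      have h7 : (0:ℝ) ≤ (u₀+K'/r^2)^3 := by positivity
      linarith only [h3, h4, h6, h7]
    -- left endpoint : value ≤ 0
    have hfL : (-(γ*D*r^2) + u₀ - K'/r^2) ^ 3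
        + γ * D * r ^ 2 * (-(γ*D*r^2) + u₀ - K'/r^2) ^ 2
        + γ * c₀ ^ 2 * r ^ 2 * (-(γ*D*r^2) + u₀ - K'/r^2) + γ * D * c₀ ^ 2 * r ^ 4 ≤ 0 := by
      have hrw : (-(γ*D*r^2) + u₀ - K'/r^2) = (-(γ*D*r^2) + u₀ + (-(K'/r^2))) := by ring
      rw [hrw, hid (-(K'/r^2))]
      have hEeq' : γ^2*D^2*(-(K'/r^2))*r^4 = -(γ^2*D^2*K'*r^2) := by
        field_simp
      rw [hEeq']
      have hle : u₀ + (-(K'/r^2)) ≤ u₀ + 1 := by linarith only [hE0]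
      have h1 : (u₀+(-(K'/r^2)))*γ*c₀^2*r^2 ≤ (u₀+1)*γ*c₀^2*r^2 := by
        have := mul_le_mul_of_nonneg_right hle (by positivity : (0:ℝ) ≤ γ*c₀^2*r^2)
        linarith only [this]
      have h2 : -(2*γ*D*r^2*(u₀+(-(K'/r^2)))^2) ≤ 0 := by
        have : (0:ℝ) ≤ 2*γ*D*r^2*(u₀+(-(K'/r^2)))^2 := by positivity
        linarith only [this]
      have h3 : (u₀+(-(K'/r^2)))^3 ≤ (u₀+1)^3 := by
        nlinarith [sq_nonneg ((u₀+(-(K'/r^2))) + (u₀+1)), sq_nonneg ((u₀+(-(K'/r^2))) - (u₀+1)),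
          hle]
      have h4 : (u₀+1)^3 ≤ (u₀+1)^3*r^2 := by
        have := mul_le_mul_of_nonneg_left hr21 (by positivity : (0:ℝ) ≤ (u₀+1)^3)
        linarith only [this]
      have h5 : (u₀+1)*γ*c₀^2*r^2 + (u₀+1)^3*r^2 ≤ (γ^2*D^2*K' - 2*γ*D*(u₀+1)^2 - 1)*r^2 := by
        have h6 : (u₀+1)*γ*c₀^2 + (u₀+1)^3 ≤ γ^2*D^2*K' - 2*γ*D*(u₀+1)^2 - 1 := by
          linarith only [hK']
        have := mul_le_mul_of_nonneg_right h6 (sq_nonneg r)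
        linarith only [this]
      have h7 : (0:ℝ) ≤ 2*γ*D*(u₀+1)^2*r^2 + r^2 := by positivity
      linarith only [h1, h2, h3, h4, h5, h7]
    obtain ⟨x, hx, hfx⟩ := exists_root _ hcont (-(γ*D*r^2) + u₀ - K'/r^2)
      (-(γ*D*r^2) + u₀ + K'/r^2) (by linarith only [hE0]) hfL hfR
    exact ⟨x, ⟨hx.1, hx.2⟩, hfx⟩
  choose! x hx using hex
  obtain ⟨C', hC'0, hC'def⟩ : ∃ C' : ℝ, 0 < C' ∧ C' = u₀ + 1 + K'/2 + M'/c₀ + 1 :=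
    ⟨_, by positivity, rfl⟩
  refine ⟨N₀, hN1, C', hC'0, (fun r => ((x r : ℝ) : ℂ)),
    (fun r => (((-((γ * D * r ^ 2 + x r) / 2)) : ℝ) : ℂ) - Complex.I *
      ((Real.sqrt (γ * c₀ ^ 2 * r ^ 2 + x r * (γ * D * r ^ 2 + x r)
        - (γ * D * r ^ 2 + x r) ^ 2 / 4) : ℝ) : ℂ)),
    (fun r => (((-((γ * D * r ^ 2 + x r) / 2)) : ℝ) : ℂ) + Complex.I *
      ((Real.sqrt (γ * c₀ ^ 2 * r ^ 2 + x r * (γ * D * r ^ 2 + x r)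
        - (γ * D * r ^ 2 + x r) ^ 2 / 4) : ℝ) : ℂ)), ?_⟩
  intro r hrN
  obtain ⟨⟨hxl, hxr⟩, hxroot⟩ := hx r hrN
  have hr1 : 1 ≤ r := le_trans hN1 hrN
  have hr0 : 0 < r := by linarith
  have hrinv0 : (0:ℝ) ≤ r⁻¹ := by positivity
  have hr2 : r ≤ r^2 := by nlinarith
  have hKr2 : K' ≤ r^2 := by linarith only [hNK, hrN, hr2]
  have hE1 : K'/r^2 ≤ 1 := by rw [div_le_one (by positivity)]; exact hKr2
  have hE0 : 0 ≤ K'/r^2 := by positivity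
  have hEr : K'/r^2 ≤ K'*r⁻¹ := by
    rw [← div_eq_mul_inv, div_le_div_iff₀ (by positivity) (by positivity)]
    have := mul_le_mul_of_nonneg_left hr2 hK'0.le
    linarith only [this]
  -- bounds on p = γDr² + x
  have hpl : u₀ - K'/r^2 ≤ γ * D * r ^ 2 + x r := by linarith only [hxl]
  have hpr : γ * D * r ^ 2 + x r ≤ u₀ + K'/r^2 := by linarith only [hxr]
  have hpabs : |γ * D * r ^ 2 + x r| ≤ u₀ + 1 := by
    rw [abs_le]; constructor
    · linarith only [hpl, hE1, hu₀0]
    · linarith only [hpr, hE1]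
  have hpu : |u₀ - (γ * D * r ^ 2 + x r)| ≤ K'/r^2 := by
    rw [abs_le]; constructor
    · linarith only [hpr]
    · linarith only [hpl]
  -- s2 bound
  have hkey : (γ * c₀ ^ 2 * r ^ 2 + x r * (γ * D * r ^ 2 + x r)
      - (γ * D * r ^ 2 + x r) ^ 2 / 4) - c₀^2*r^2
      = γ*D*r^2*(u₀ - (γ * D * r ^ 2 + x r)) + 3/4*(γ * D * r ^ 2 + x r)^2 := by
    linear_combination (-(r^2))*hu₀
  have h2 : |γ*D*r^2*(u₀ - (γ * D * r ^ 2 + x r))| ≤ γ*D*K' := by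
    rw [abs_mul, abs_of_nonneg (by positivity : (0:ℝ) ≤ γ*D*r^2)]
    have h := mul_le_mul_of_nonneg_left hpu (by positivity : (0:ℝ) ≤ γ*D*r^2)
    have heq : γ*D*r^2*(K'/r^2) = γ*D*K' := by field_simp
    linarith only [h, heq.le, heq.ge]
  have h3 : 3/4*(γ * D * r ^ 2 + x r)^2 ≤ 3/4*(u₀+1)^2 := by
    have := sq_le_sq' (by linarith [abs_le.mp hpabs] : -(u₀+1) ≤ γ * D * r ^ 2 + x r)
      (by linarith [abs_le.mp hpabs] : γ * D * r ^ 2 + x r ≤ u₀+1)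
    linarith only [this]
  have hs2diff : |(γ * c₀ ^ 2 * r ^ 2 + x r * (γ * D * r ^ 2 + x r)
      - (γ * D * r ^ 2 + x r) ^ 2 / 4) - c₀^2*r^2| ≤ M' := by
    have h4 := abs_le.mp h2
    rw [abs_le]; constructor
    · rw [hkey, hM'def]
      have : (0:ℝ) ≤ 3/4*(γ * D * r ^ 2 + x r)^2 := by positivity
      linarith only [h4.1, this, sq_nonneg (u₀+1)]
    · rw [hkey, hM'def]
      linarith only [h4.2, h3, sq_nonneg (u₀+1)]
  have h4 := abs_le.mp hs2diff
  have hcr : M' + 1 ≤ c₀^2*r^2 := by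
    have h5 : (M'+1)/c₀^2 ≤ r^2 := by linarith only [hNM, hrN, hr2]
    rw [div_le_iff₀ (by positivity)] at h5
    linarith only [h5]
  have hs2nn : 0 ≤ γ * c₀ ^ 2 * r ^ 2 + x r * (γ * D * r ^ 2 + x r)
      - (γ * D * r ^ 2 + x r) ^ 2 / 4 := by
    linarith only [h4.1, hcr]
  have hsq : Real.sqrt (γ * c₀ ^ 2 * r ^ 2 + x r * (γ * D * r ^ 2 + x r)
      - (γ * D * r ^ 2 + x r) ^ 2 / 4) ^ 2
      = γ * c₀ ^ 2 * r ^ 2 + x r * (γ * D * r ^ 2 + x r)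
      - (γ * D * r ^ 2 + x r) ^ 2 / 4 := Real.sq_sqrt hs2nn
  have hm0 : 0 < c₀ * r := by positivity
  have hsm : |Real.sqrt (γ * c₀ ^ 2 * r ^ 2 + x r * (γ * D * r ^ 2 + x r)
      - (γ * D * r ^ 2 + x r) ^ 2 / 4) - c₀ * r| ≤ (M'/c₀) * r⁻¹ := by
    have h1 := sqrt_close _ _ hs2nn hm0
    have hm2 : (c₀ * r) ^ 2 = c₀^2*r^2 := by ring
    rw [hm2] at h1
    have h5 : |γ * c₀ ^ 2 * r ^ 2 + x r * (γ * D * r ^ 2 + x r)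
        - (γ * D * r ^ 2 + x r) ^ 2 / 4 - c₀^2*r^2| / (c₀ * r) ≤ M' / (c₀*r) :=
      div_le_div_of_nonneg_right hs2diff hm0.le
    have h6 : M'/(c₀*r) = (M'/c₀) * r⁻¹ := by field_simp
    rw [h6] at h5
    exact le_trans h1 h5
  refine ⟨?_, ?_, ?_, ?_⟩
  · intro z
    rw [invCubic]
    exact cubic_factor (γ * D * r ^ 2) (γ * c₀ ^ 2 * r ^ 2) (γ * D * c₀ ^ 2 * r ^ 4)
      (x r) _ hxroot hsq z
  · have hcast : ((x r : ℝ) : ℂ) + ((γ * D * r ^ 2 : ℝ) : ℂ)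
        = ((x r + γ * D * r ^ 2 : ℝ) : ℂ) := by push_cast; ring
    rw [hcast, Complex.norm_real, Real.norm_eq_abs]
    have hq1 : (0:ℝ) ≤ K'/2 := by positivity
    have hq2 : (0:ℝ) ≤ M'/c₀ := by positivity
    have habs : |x r + γ * D * r ^ 2| ≤ u₀ + 1 := by
      rw [abs_le]; constructor
      · linarith only [hpl, hE1, hu₀0]
      · linarith only [hpr, hE1]
    rw [hC'def]
    linarith only [habs, hq1, hq2]
  · have hcast : (((-((γ * D * r ^ 2 + x r) / 2)) : ℝ) : ℂ) - Complex.I *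
        ((Real.sqrt (γ * c₀ ^ 2 * r ^ 2 + x r * (γ * D * r ^ 2 + x r)
          - (γ * D * r ^ 2 + x r) ^ 2 / 4) : ℝ) : ℂ)
        + Complex.I * ((c₀ * r : ℝ) : ℂ)
        + (((γ - 1) * c₀ ^ 2 / (2 * γ * D) : ℝ) : ℂ)
        = ((-((γ * D * r ^ 2 + x r) / 2) + (γ - 1) * c₀ ^ 2 / (2 * γ * D) : ℝ) : ℂ)
          + Complex.I * ((c₀ * r - Real.sqrt (γ * c₀ ^ 2 * r ^ 2
            + x r * (γ * D * r ^ 2 + x r) - (γ * D * r ^ 2 + x r) ^ 2 / 4) : ℝ) : ℂ) := by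
      push_cast; ring
    rw [hcast]
    refine le_trans (norm_re_im _ _) ?_
    have hb1 : |(-((γ * D * r ^ 2 + x r) / 2) + (γ - 1) * c₀ ^ 2 / (2 * γ * D))|
        ≤ (K'/2) * r⁻¹ := by
      have heq : (-((γ * D * r ^ 2 + x r) / 2) + (γ - 1) * c₀ ^ 2 / (2 * γ * D))
          = (u₀ - (γ * D * r ^ 2 + x r))/2 := by rw [hhalf]; ring
      rw [heq, abs_div]
      have : |(2:ℝ)| = 2 := by norm_num
      rw [this]
      linarith only [hpu, hEr]
    have hb2 : |c₀ * r - Real.sqrt (γ * c₀ ^ 2 * r ^ 2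
        + x r * (γ * D * r ^ 2 + x r) - (γ * D * r ^ 2 + x r) ^ 2 / 4)|
        ≤ (M'/c₀) * r⁻¹ := by rw [abs_sub_comm]; exact hsm
    have hb3 : (K'/2)*r⁻¹ + (M'/c₀)*r⁻¹ ≤ C'*r⁻¹ := by
      rw [hC'def]
      have h : (0:ℝ) ≤ (u₀ + 1 + 1)*r⁻¹ := by positivity
      linarith only [h]
    linarith only [hb1, hb2, hb3]
  · have hcast : (((-((γ * D * r ^ 2 + x r) / 2)) : ℝ) : ℂ) + Complex.I *
        ((Real.sqrt (γ * c₀ ^ 2 * r ^ 2 + x r * (γ * D * r ^ 2 + x r)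
          - (γ * D * r ^ 2 + x r) ^ 2 / 4) : ℝ) : ℂ)
        - Complex.I * ((c₀ * r : ℝ) : ℂ)
        + (((γ - 1) * c₀ ^ 2 / (2 * γ * D) : ℝ) : ℂ)
        = ((-((γ * D * r ^ 2 + x r) / 2) + (γ - 1) * c₀ ^ 2 / (2 * γ * D) : ℝ) : ℂ)
          + Complex.I * ((Real.sqrt (γ * c₀ ^ 2 * r ^ 2
            + x r * (γ * D * r ^ 2 + x r) - (γ * D * r ^ 2 + x r) ^ 2 / 4) - c₀ * r : ℝ) : ℂ) := by
      push_cast; ring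
    rw [hcast]
    refine le_trans (norm_re_im _ _) ?_
    have hb1 : |(-((γ * D * r ^ 2 + x r) / 2) + (γ - 1) * c₀ ^ 2 / (2 * γ * D))|
        ≤ (K'/2) * r⁻¹ := by
      have heq : (-((γ * D * r ^ 2 + x r) / 2) + (γ - 1) * c₀ ^ 2 / (2 * γ * D))
          = (u₀ - (γ * D * r ^ 2 + x r))/2 := by rw [hhalf]; ring
      rw [heq, abs_div]
      have : |(2:ℝ)| = 2 := by norm_num
      rw [this]
      linarith only [hpu, hEr]
    have hb3 : (K'/2)*r⁻¹ + (M'/c₀)*r⁻¹ ≤ C'*r⁻¹ := by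
      rw [hC'def]
      have h : (0:ℝ) ≤ (u₀ + 1 + 1)*r⁻¹ := by positivity
      linarith only [h]
    linarith only [hb1, hsm, hb3]


/-- Root expansions for the inviscid characteristic cubic `R_r`:
(i) for small `r` there are roots
`ζ₁ = −D r² + O(r⁴)`, `ζ_{2,3} = ∓i√γ c₀ r − ((γ−1)D/2) r² + O(r³)`;
(ii) for large `r` there are roots
`ζ₁ = −γD r² + O(1)`, `ζ_{2,3} = ∓i c₀ r − (γ−1)c₀²/(2γD) + O(r⁻¹)`.
In both regimes `ζ₁(r), ζ₂(r), ζ₃(r)` are exactly the three roots of `R_r`. -/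
theorem stmt_17 (c₀ D γ : ℝ) (hc₀ : 0 < c₀) (hD : 0 < D) (hγ : 1 < γ) :
    (∃ ε₀ : ℝ, 0 < ε₀ ∧ ε₀ < 1 ∧ ∃ C : ℝ, 0 < C ∧ ∃ z1 z2 z3 : ℝ → ℂ,
      ∀ r : ℝ, 0 < r → r < ε₀ →
        (∀ z : ℂ, invCubic c₀ D γ r z = (z - z1 r) * (z - z2 r) * (z - z3 r)) ∧
        ‖z1 r + ((D * r ^ 2 : ℝ) : ℂ)‖ ≤ C * r ^ 4 ∧
        ‖z2 r + Complex.I * ((Real.sqrt γ * c₀ * r : ℝ) : ℂ)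
            + (((γ - 1) * D / 2 * r ^ 2 : ℝ) : ℂ)‖ ≤ C * r ^ 3 ∧
        ‖z3 r - Complex.I * ((Real.sqrt γ * c₀ * r : ℝ) : ℂ)
            + (((γ - 1) * D / 2 * r ^ 2 : ℝ) : ℂ)‖ ≤ C * r ^ 3) ∧
    (∃ N₀ : ℝ, 1 ≤ N₀ ∧ ∃ C' : ℝ, 0 < C' ∧ ∃ z1 z2 z3 : ℝ → ℂ,
      ∀ r : ℝ, N₀ ≤ r →
        (∀ z : ℂ, invCubic c₀ D γ r z = (z - z1 r) * (z - z2 r) * (z - z3 r)) ∧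
        ‖z1 r + ((γ * D * r ^ 2 : ℝ) : ℂ)‖ ≤ C' ∧
        ‖z2 r + Complex.I * ((c₀ * r : ℝ) : ℂ)
            + (((γ - 1) * c₀ ^ 2 / (2 * γ * D) : ℝ) : ℂ)‖ ≤ C' * r⁻¹ ∧
        ‖z3 r - Complex.I * ((c₀ * r : ℝ) : ℂ)
            + (((γ - 1) * c₀ ^ 2 / (2 * γ * D) : ℝ) : ℂ)‖ ≤ C' * r⁻¹) :=
  ⟨small_part c₀ D γ hc₀ hD hγ, large_part c₀ D γ hc₀ hD hγ⟩
end

section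
/- Let n ≥ 2 and s > n + 2. Let c₀, D, α_p be positive reals and γ > 1. Let φ₀, φ₁, T₀ ∈ L¹(ℝⁿ) with N_s(φ₀), N_{s−1}(φ₁), N_{s−1}(T₀) < ∞, where N_σ(g) := sup_{ξ∈ℝⁿ} (1+|ξ|²)^{σ/2} |ĝ(ξ)|. For each ξ ∈ ℝⁿ let t ↦ w(t,ξ) be the solution of the inviscid phase-space ODE ∂_t³w + γD|ξ|²∂_t²w + γc₀²|ξ|²∂_t w + γDc₀²|ξ|⁴ w = 0 with w(0,ξ) = φ̂₀(ξ), ∂_t w(0,ξ) = φ̂₁(ξ), ∂_t²w(0,ξ) = −γc₀²|ξ|²φ̂₀(ξ) + α_p c₀² γ D |ξ|² T̂₀(ξ). Then there exists C > 0 such that for all t > 0, ∫_{ℝⁿ} ( ∫₀^t |ξ|^{−2} |∂_t²w(τ,ξ)|² + |ξ|² |∂_t w(τ,ξ)|² dτ )^{1/2} dξ ≤ C ( N_s(φ₀) + N_{s−1}(φ₁) + N_{s−1}(T₀) ). -/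
open MeasureTheory Set
set_option maxHeartbeats 1600000

lemma ball_inv_finite {n : ℕ} (hn : 2 ≤ n) :
    (∫⁻ ξ : EuclideanSpace ℝ (Fin n) in Metric.closedBall 0 1, ENNReal.ofReal (‖ξ‖⁻¹)) < ⊤ := by
  set E := EuclideanSpace ℝ (Fin n)
  have hfr : Module.finrank ℝ E = n := by
    simp [E, finrank_euclideanSpace]
  set μ' := (volume : Measure E).restrict (Metric.closedBall 0 1) with hμ'
  have hrw : (∫⁻ ξ : E in Metric.closedBall 0 1, ENNReal.ofReal (‖ξ‖⁻¹))
      = ∫⁻ t in Ioi (0:ℝ), μ' {a : E | t ≤ ‖a‖⁻¹} :=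
    lintegral_eq_lintegral_meas_le μ'
      (ae_of_all _ fun x => inv_nonneg.2 (norm_nonneg x))
      (measurable_norm.inv.aemeasurable)
  rw [hrw]
  have hsub : ∀ t : ℝ, 0 < t → {a : E | t ≤ ‖a‖⁻¹} ⊆ Metric.closedBall 0 t⁻¹ := by
    intro t ht a ha
    simp only [mem_setOf_eq] at ha
    rcases eq_or_lt_of_le (norm_nonneg a) with h0 | h0
    · simp [Metric.mem_closedBall, dist_zero_right, ← h0, inv_nonneg, ht.le]
    · have : ‖a‖ ≤ t⁻¹ := by
        exact (le_inv_comm₀ ht h0).mp ha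
      simpa [Metric.mem_closedBall, dist_zero_right] using this
  calc ∫⁻ t in Ioi (0:ℝ), μ' {a : E | t ≤ ‖a‖⁻¹}
      ≤ ∫⁻ t in Ioc (0:ℝ) 1 ∪ Ioi 1, μ' {a : E | t ≤ ‖a‖⁻¹} :=
        lintegral_mono_set Ioi_subset_Ioc_union_Ioi
    _ ≤ (∫⁻ t in Ioc (0:ℝ) 1, μ' {a : E | t ≤ ‖a‖⁻¹})
        + ∫⁻ t in Ioi (1:ℝ), μ' {a : E | t ≤ ‖a‖⁻¹} := lintegral_union_le _ _ _
    _ < ⊤ := by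
        apply ENNReal.add_lt_top.2
        constructor
        · calc (∫⁻ t in Ioc (0:ℝ) 1, μ' {a : E | t ≤ ‖a‖⁻¹})
              ≤ ∫⁻ _ in Ioc (0:ℝ) 1, (volume (Metric.closedBall (0:E) 1)) := by
                apply setLIntegral_mono' measurableSet_Ioc
                intro t _
                calc μ' {a : E | t ≤ ‖a‖⁻¹} ≤ μ' univ := measure_mono (subset_univ _)
                  _ ≤ volume (Metric.closedBall (0:E) 1) := by
                      rw [hμ', Measure.restrict_apply_univ]
            _ < ⊤ := by
                rw [setLIntegral_const]
                exact ENNReal.mul_lt_top measure_closedBall_lt_top (by simp)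
        · have key : ∀ t ∈ Ioi (1:ℝ), μ' {a : E | t ≤ ‖a‖⁻¹}
              ≤ ENNReal.ofReal (t ^ (-2:ℝ)) * volume (Metric.ball (0:E) 1) := by
            intro t ht
            have ht1 : (1:ℝ) < t := ht
            have ht0 : (0:ℝ) < t := lt_trans one_pos ht1
            calc μ' {a : E | t ≤ ‖a‖⁻¹}
                ≤ volume {a : E | t ≤ ‖a‖⁻¹} := Measure.restrict_le_self _
              _ ≤ volume (Metric.closedBall (0:E) t⁻¹) := measure_mono (hsub t ht0)
              _ = ENNReal.ofReal (t⁻¹ ^ Module.finrank ℝ E) * volume (Metric.ball (0:E) 1) :=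
                  Measure.addHaar_closedBall _ _ (by positivity)
              _ ≤ ENNReal.ofReal (t ^ (-2:ℝ)) * volume (Metric.ball (0:E) 1) := by
                  gcongr
                  rw [hfr]
                  have h1 : t⁻¹ ≤ 1 := by
                    rw [inv_le_one_iff₀]; right; exact ht1.le
                  have h2 : t⁻¹ ^ n ≤ t⁻¹ ^ 2 :=
                    pow_le_pow_of_le_one (by positivity) h1 hn
                  calc t⁻¹ ^ n ≤ t⁻¹ ^ 2 := h2
                    _ = t ^ (-2:ℝ) := by
                        rw [show (-2:ℝ) = -((2:ℕ):ℝ) by norm_num, Real.rpow_neg ht0.le,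
                          Real.rpow_natCast, inv_pow]
          calc (∫⁻ t in Ioi (1:ℝ), μ' {a : E | t ≤ ‖a‖⁻¹})
              ≤ ∫⁻ t in Ioi (1:ℝ), ENNReal.ofReal (t ^ (-2:ℝ)) * volume (Metric.ball (0:E) 1) :=
                setLIntegral_mono' measurableSet_Ioi key
            _ = (∫⁻ t in Ioi (1:ℝ), ENNReal.ofReal (t ^ (-2:ℝ))) * volume (Metric.ball (0:E) 1) :=
                lintegral_mul_const' _ _ measure_ball_lt_top.ne
            _ < ⊤ := ENNReal.mul_lt_top
                ((integrableOn_Ioi_rpow_of_lt (by norm_num) one_pos).setLIntegral_lt_top)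
                measure_ball_lt_top

lemma core_energy (a b c θ ρ : ℝ) (hρ : 0 < ρ) (hθ : 0 < θ) (hθa : θ < a)
    (hcθ : c < b * θ) (hb : 0 < b) (hc : 0 < c)
    (x y z g : ℝ → ℝ)
    (hx : ∀ t, HasDerivAt x (y t) t) (hy : ∀ t, HasDerivAt y (z t) t)
    (hz : ∀ t, HasDerivAt z (g t) t) (hg : Continuous g)
    (hode : ∀ t, 0 ≤ t → g t = -(a*ρ^2*z t + b*ρ^2*y t + c*ρ^4*x t))
    (t : ℝ) (ht : 0 ≤ t) :
    ∫ τ in (0:ℝ)..t, ((z τ)^2/ρ^2 + ρ^2*(y τ)^2)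
      ≤ (1/(2*min (a-θ) (b*θ-c))) *
          ((1+ρ^2)/ρ^4*(z 0*z 0) + 2*θ*(1+ρ^2)/ρ^2*(y 0*z 0)
            + (1+ρ^2)*(b/ρ^2+a*θ)*(y 0*y 0) + 2*c*(1+ρ^2)*(x 0*y 0)
            + c*θ*ρ^2*(1+ρ^2)*(x 0*x 0)) := by
  set κ := min (a-θ) (b*θ-c) with hκdef
  have hκ : 0 < κ := lt_min (by linarith) (by linarith)
  have hκ1 : κ ≤ a - θ := min_le_left _ _
  have hκ2 : κ ≤ b*θ - c := min_le_right _ _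
  have hxc : Continuous x := continuous_iff_continuousAt.mpr fun τ => (hx τ).continuousAt
  have hyc : Continuous y := continuous_iff_continuousAt.mpr fun τ => (hy τ).continuousAt
  have hzc : Continuous z := continuous_iff_continuousAt.mpr fun τ => (hz τ).continuousAt
  set C1 := (1+ρ^2)/ρ^4 with hC1
  set C2 := 2*θ*(1+ρ^2)/ρ^2 with hC2
  set C3 := (1+ρ^2)*(b/ρ^2+a*θ) with hC3
  set C4 := 2*c*(1+ρ^2) with hC4
  set C5 := c*θ*ρ^2*(1+ρ^2) with hC5
  set V : ℝ → ℝ := fun τ =>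
    C1*(z τ*z τ) + C2*(y τ*z τ) + C3*(y τ*y τ) + C4*(x τ*y τ) + C5*(x τ*x τ) with hV
  set Φ : ℝ → ℝ := fun τ =>
    C1*(g τ*z τ + z τ*g τ) + C2*(z τ*z τ + y τ*g τ) + C3*(z τ*y τ + y τ*z τ)
      + C4*(y τ*y τ + x τ*z τ) + C5*(y τ*x τ + x τ*y τ) with hΦ
  have hVd : ∀ τ, HasDerivAt V (Φ τ) τ := by
    intro τ
    exact ((((((hz τ).mul (hz τ)).const_mul C1).add (((hy τ).mul (hz τ)).const_mul C2)).add
        (((hy τ).mul (hy τ)).const_mul C3)).add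
      (((hx τ).mul (hy τ)).const_mul C4)).add (((hx τ).mul (hx τ)).const_mul C5)
  have hΦc : Continuous Φ := by
    exact ((((continuous_const.mul ((hg.mul hzc).add (hzc.mul hg))).add
        (continuous_const.mul ((hzc.mul hzc).add (hyc.mul hg)))).add
      (continuous_const.mul ((hzc.mul hyc).add (hyc.mul hzc)))).add
        (continuous_const.mul ((hyc.mul hyc).add (hxc.mul hzc)))).add
      (continuous_const.mul ((hyc.mul hxc).add (hxc.mul hyc)))
  have hdiss : ∀ τ, 0 ≤ τ → 2*κ*((z τ)^2/ρ^2 + ρ^2*(y τ)^2) ≤ -Φ τ := by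
    intro τ hτ
    have hid : -Φ τ = 2*(1+ρ^2)*((a-θ)*((z τ)^2/ρ^2) + (b*θ-c)*(y τ)^2) := by
      simp only [hΦ, hC1, hC2, hC3, hC4, hC5, hode τ hτ]
      field_simp
      ring
    rw [hid]
    set Z := (z τ)^2/ρ^2 with hZdef
    have hZ : 0 ≤ Z := by positivity
    have hY : 0 ≤ (y τ)^2 := sq_nonneg _
    have hρ2 : 0 ≤ ρ^2 := sq_nonneg _
    nlinarith [mul_nonneg (sub_nonneg.2 hκ1) hZ,
      mul_nonneg hρ2 (mul_nonneg (sub_nonneg.2 hκ1) hZ),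
      mul_nonneg (sub_nonneg.2 hκ2) hY,
      mul_nonneg hρ2 (mul_nonneg (sub_nonneg.2 hκ2) hY),
      mul_nonneg (mul_nonneg hκ.le hρ2) hZ, mul_nonneg hκ.le hY]
  have hVpos : ∀ τ, 0 ≤ V τ := by
    intro τ
    have hbc : 0 ≤ b - c/θ := by
      rw [sub_nonneg, div_le_iff₀ hθ]; linarith
    have hid2 : ρ^4 * V τ = (1+ρ^2) * ((z τ + θ*ρ^2*y τ)^2
        + (c/θ)*ρ^2*(θ*ρ^2*x τ + y τ)^2 + (b - c/θ)*ρ^2*(y τ)^2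
        + θ*(a-θ)*ρ^4*(y τ)^2) := by
      simp only [hV, hC1, hC2, hC3, hC4, hC5]
      field_simp
      ring
    have hRHS : 0 ≤ (1+ρ^2) * ((z τ + θ*ρ^2*y τ)^2
        + (c/θ)*ρ^2*(θ*ρ^2*x τ + y τ)^2 + (b - c/θ)*ρ^2*(y τ)^2
        + θ*(a-θ)*ρ^4*(y τ)^2) := by
      have h1 : 0 ≤ (c/θ)*ρ^2*(θ*ρ^2*x τ + y τ)^2 := by positivity
      have h2 : 0 ≤ (b - c/θ)*ρ^2*(y τ)^2 :=
        mul_nonneg (mul_nonneg hbc (sq_nonneg _)) (sq_nonneg _)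
      have h3 : 0 ≤ θ*(a-θ)*ρ^4*(y τ)^2 := by
        apply mul_nonneg (mul_nonneg (mul_nonneg hθ.le (by linarith)) (by positivity)) (sq_nonneg _)
      nlinarith [sq_nonneg (z τ + θ*ρ^2*y τ), sq_nonneg ρ]
    have h4 : (0:ℝ) < ρ^4 := by positivity
    rw [← hid2] at hRHS
    have h5 : ρ^4 * 0 ≤ ρ^4 * V τ := by simpa using hRHS
    exact le_of_mul_le_mul_left h5 h4
  have hΦint : IntervalIntegrable Φ volume 0 t := hΦc.intervalIntegrable _ _
  have hftc : ∫ τ in (0:ℝ)..t, Φ τ = V t - V 0 :=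
    intervalIntegral.integral_eq_sub_of_hasDerivAt (fun τ _ => hVd τ) hΦint
  have hdisscont : Continuous (fun τ => (z τ)^2/ρ^2 + ρ^2*(y τ)^2) :=
    (((hzc.pow 2).div_const _).add (continuous_const.mul (hyc.pow 2)))
  have hmono : ∫ τ in (0:ℝ)..t, 2*κ*((z τ)^2/ρ^2 + ρ^2*(y τ)^2)
      ≤ ∫ τ in (0:ℝ)..t, -Φ τ := by
    apply intervalIntegral.integral_mono_on ht
      ((continuous_const.mul hdisscont).intervalIntegrable _ _) hΦint.neg
    intro τ hτ
    exact hdiss τ hτ.1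
  rw [intervalIntegral.integral_neg, hftc] at hmono
  rw [intervalIntegral.integral_const_mul] at hmono
  have hV0 : V 0 = C1*(z 0*z 0) + C2*(y 0*z 0) + C3*(y 0*y 0) + C4*(x 0*y 0) + C5*(x 0*x 0) := rfl
  clear_value V Φ κ C1 C2 C3 C4 C5
  have hmono' : 2*κ*(∫ τ in (0:ℝ)..t, ((z τ)^2/ρ^2 + ρ^2*(y τ)^2)) ≤ -(V t - V 0) := hmono
  have hend : 2*κ*(∫ τ in (0:ℝ)..t, ((z τ)^2/ρ^2 + ρ^2*(y τ)^2)) ≤ V 0 := by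
    have := hVpos t
    linarith
  have h2κ : (0:ℝ) < 2*κ := by linarith
  rw [hV0] at hend
  rw [one_div, inv_mul_eq_div, le_div_iff₀ h2κ]
  linarith

lemma hasDerivAt_comp_re {f : ℝ → ℂ} {f' : ℂ} {t : ℝ} (h : HasDerivAt f f' t) :
    HasDerivAt (fun τ => (f τ).re) f'.re t := by
  exact (Complex.reCLM.hasFDerivAt.comp_hasDerivAt t h)

lemma hasDerivAt_comp_im {f : ℝ → ℂ} {f' : ℂ} {t : ℝ} (h : HasDerivAt f f' t) :
    HasDerivAt (fun τ => (f τ).im) f'.im t := by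
  exact (Complex.imCLM.hasFDerivAt.comp_hasDerivAt t h)

lemma norm_sq_complex (v : ℂ) : ‖v‖^2 = v.re^2 + v.im^2 := by
  rw [Complex.sq_norm, Complex.normSq_apply]
  ring

lemma quad_bound {C1 C2 C3 C4 C5 p q r P Q R : ℝ}
    (h1 : 0 ≤ C1) (h2 : 0 ≤ C2) (h3 : 0 ≤ C3) (h4 : 0 ≤ C4) (h5 : 0 ≤ C5)
    (hp : |p| ≤ P) (hq : |q| ≤ Q) (hr : |r| ≤ R) :
    C1*(r*r) + C2*(q*r) + C3*(q*q) + C4*(p*q) + C5*(p*p)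
      ≤ C1*(R*R) + C2*(Q*R) + C3*(Q*Q) + C4*(P*Q) + C5*(P*P) := by
  have hP : 0 ≤ P := (abs_nonneg p).trans hp
  have hQ : 0 ≤ Q := (abs_nonneg q).trans hq
  have hR : 0 ≤ R := (abs_nonneg r).trans hr
  have hrr : r*r ≤ R*R := by
    calc r*r ≤ |r*r| := le_abs_self _
      _ = |r| * |r| := abs_mul r r
      _ ≤ R*R := mul_le_mul hr hr (abs_nonneg r) hR
  have hqr : q*r ≤ Q*R := by
    calc q*r ≤ |q*r| := le_abs_self _
      _ = |q| * |r| := abs_mul q r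
      _ ≤ Q*R := mul_le_mul hq hr (abs_nonneg r) hQ
  have hqq : q*q ≤ Q*Q := by
    calc q*q ≤ |q*q| := le_abs_self _
      _ = |q| * |q| := abs_mul q q
      _ ≤ Q*Q := mul_le_mul hq hq (abs_nonneg q) hQ
  have hpq : p*q ≤ P*Q := by
    calc p*q ≤ |p*q| := le_abs_self _
      _ = |p| * |q| := abs_mul p q
      _ ≤ P*Q := mul_le_mul hp hq (abs_nonneg q) hP
  have hpp : p*p ≤ P*P := by
    calc p*p ≤ |p*p| := le_abs_self _
      _ = |p| * |p| := abs_mul p p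
      _ ≤ P*P := mul_le_mul hp hp (abs_nonneg p) hP
  gcongr <;> assumption

lemma complex_energy (a b c θ ρ : ℝ) (hρ : 0 < ρ) (hθ : 0 < θ) (hθa : θ < a)
    (hcθ : c < b * θ) (hb : 0 < b) (hc : 0 < c)
    (W : ℝ → ℂ) (hW : ContDiff ℝ 3 W)
    (hode : ∀ t : ℝ, 0 ≤ t →
      deriv (deriv (deriv W)) t + ((a * ρ^2 : ℝ) : ℂ) * deriv (deriv W) t
        + ((b * ρ^2 : ℝ) : ℂ) * deriv W t + ((c * ρ^4 : ℝ) : ℂ) * W t = 0)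
    (t : ℝ) (ht : 0 ≤ t) :
    ∫ τ in (0:ℝ)..t, (‖deriv (deriv W) τ‖^2/ρ^2 + ρ^2*‖deriv W τ‖^2)
      ≤ (1/(min (a-θ) (b*θ-c))) *
          ((1+ρ^2)/ρ^4*(‖deriv (deriv W) 0‖*‖deriv (deriv W) 0‖)
            + 2*θ*(1+ρ^2)/ρ^2*(‖deriv W 0‖*‖deriv (deriv W) 0‖)
            + (1+ρ^2)*(b/ρ^2+a*θ)*(‖deriv W 0‖*‖deriv W 0‖)
            + 2*c*(1+ρ^2)*(‖W 0‖*‖deriv W 0‖)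
            + c*θ*ρ^2*(1+ρ^2)*(‖W 0‖*‖W 0‖)) := by
  have hκ : 0 < min (a-θ) (b*θ-c) := lt_min (by linarith) (by linarith)
  have hd0 : Differentiable ℝ W := hW.differentiable (by norm_num)
  have hW1 : ContDiff ℝ 2 (deriv W) := by
    have := (contDiff_succ_iff_deriv (n := 2)).mp hW
    exact this.2.2
  have hd1 : Differentiable ℝ (deriv W) := hW1.differentiable (by norm_num)
  have hW2 : ContDiff ℝ 1 (deriv (deriv W)) := by
    have := (contDiff_succ_iff_deriv (n := 1)).mp hW1
    exact this.2.2
  have hd2 : Differentiable ℝ (deriv (deriv W)) := hW2.differentiable (by norm_num)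
  have hW3c : Continuous (deriv (deriv (deriv W))) := hW2.continuous_deriv le_rfl
  set W1 := deriv W with hW1def
  set W2 := deriv W1 with hW2def
  set W3 := deriv W2 with hW3def
  have hD0 : ∀ τ, HasDerivAt W (W1 τ) τ := fun τ => (hd0 τ).hasDerivAt
  have hD1 : ∀ τ, HasDerivAt W1 (W2 τ) τ := fun τ => (hd1 τ).hasDerivAt
  have hD2 : ∀ τ, HasDerivAt W2 (W3 τ) τ := fun τ => (hd2 τ).hasDerivAt
  have hcode : ∀ τ : ℝ, 0 ≤ τ →
      W3 τ = -(((a * ρ^2 : ℝ) : ℂ) * W2 τ + ((b * ρ^2 : ℝ) : ℂ) * W1 τ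
        + ((c * ρ^4 : ℝ) : ℂ) * W τ) := by
    intro τ hτ
    have := hode τ hτ
    linear_combination this
  -- real and imaginary parts
  set xr : ℝ → ℝ := fun τ => (W τ).re with hxr
  set yr : ℝ → ℝ := fun τ => (W1 τ).re with hyr
  set zr : ℝ → ℝ := fun τ => (W2 τ).re with hzr
  set gr : ℝ → ℝ := fun τ => (W3 τ).re with hgr
  set xi : ℝ → ℝ := fun τ => (W τ).im with hxi
  set yi : ℝ → ℝ := fun τ => (W1 τ).im with hyi
  set zi : ℝ → ℝ := fun τ => (W2 τ).im with hzi
  set gi : ℝ → ℝ := fun τ => (W3 τ).im with hgi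
  have hDxr : ∀ τ, HasDerivAt xr (yr τ) τ := fun τ => hasDerivAt_comp_re (hD0 τ)
  have hDyr : ∀ τ, HasDerivAt yr (zr τ) τ := fun τ => hasDerivAt_comp_re (hD1 τ)
  have hDzr : ∀ τ, HasDerivAt zr (gr τ) τ := fun τ => hasDerivAt_comp_re (hD2 τ)
  have hDxi : ∀ τ, HasDerivAt xi (yi τ) τ := fun τ => hasDerivAt_comp_im (hD0 τ)
  have hDyi : ∀ τ, HasDerivAt yi (zi τ) τ := fun τ => hasDerivAt_comp_im (hD1 τ)
  have hDzi : ∀ τ, HasDerivAt zi (gi τ) τ := fun τ => hasDerivAt_comp_im (hD2 τ)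
  have hgrc : Continuous gr := Complex.continuous_re.comp hW3c
  have hgic : Continuous gi := Complex.continuous_im.comp hW3c
  have hoder : ∀ τ, 0 ≤ τ → gr τ = -(a*ρ^2*zr τ + b*ρ^2*yr τ + c*ρ^4*xr τ) := by
    intro τ hτ
    have h := congrArg Complex.re (hcode τ hτ)
    simp only [Complex.add_re, Complex.neg_re, Complex.mul_re, Complex.ofReal_re,
      Complex.ofReal_im, zero_mul, sub_zero] at h
    simp only [hgr, hzr, hyr, hxr]
    linarith [h]
  have hodei : ∀ τ, 0 ≤ τ → gi τ = -(a*ρ^2*zi τ + b*ρ^2*yi τ + c*ρ^4*xi τ) := by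
    intro τ hτ
    have h := congrArg Complex.im (hcode τ hτ)
    simp only [Complex.add_im, Complex.neg_im, Complex.mul_im, Complex.ofReal_re,
      Complex.ofReal_im, zero_mul, add_zero] at h
    simp only [hgi, hzi, hyi, hxi]
    linarith [h]
  have hr := core_energy a b c θ ρ hρ hθ hθa hcθ hb hc xr yr zr gr
    hDxr hDyr hDzr hgrc hoder t ht
  have hi := core_energy a b c θ ρ hρ hθ hθa hcθ hb hc xi yi zi gi
    hDxi hDyi hDzi hgic hodei t ht
  -- split the norm integrand
  have hsplit : ∀ τ, ‖W2 τ‖^2/ρ^2 + ρ^2*‖W1 τ‖^2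
      = ((zr τ)^2/ρ^2 + ρ^2*(yr τ)^2) + ((zi τ)^2/ρ^2 + ρ^2*(yi τ)^2) := by
    intro τ
    rw [norm_sq_complex (W2 τ), norm_sq_complex (W1 τ)]
    simp only [hzr, hzi, hyr, hyi]
    ring
  have hyrc : Continuous yr := continuous_iff_continuousAt.mpr fun τ => (hDyr τ).continuousAt
  have hzrc : Continuous zr := continuous_iff_continuousAt.mpr fun τ => (hDzr τ).continuousAt
  have hyic : Continuous yi := continuous_iff_continuousAt.mpr fun τ => (hDyi τ).continuousAt
  have hzic : Continuous zi := continuous_iff_continuousAt.mpr fun τ => (hDzi τ).continuousAt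
  have hIr : IntervalIntegrable (fun τ => (zr τ)^2/ρ^2 + ρ^2*(yr τ)^2) volume 0 t :=
    ((((hzrc.pow 2).div_const _).add (continuous_const.mul (hyrc.pow 2)))).intervalIntegrable _ _
  have hIi : IntervalIntegrable (fun τ => (zi τ)^2/ρ^2 + ρ^2*(yi τ)^2) volume 0 t :=
    ((((hzic.pow 2).div_const _).add (continuous_const.mul (hyic.pow 2)))).intervalIntegrable _ _
  have hintsplit : ∫ τ in (0:ℝ)..t, (‖W2 τ‖^2/ρ^2 + ρ^2*‖W1 τ‖^2)
      = (∫ τ in (0:ℝ)..t, ((zr τ)^2/ρ^2 + ρ^2*(yr τ)^2))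
        + ∫ τ in (0:ℝ)..t, ((zi τ)^2/ρ^2 + ρ^2*(yi τ)^2) := by
    rw [← intervalIntegral.integral_add hIr hIi]
    apply intervalIntegral.integral_congr
    intro τ _
    exact hsplit τ
  rw [hintsplit]
  -- bound each V0 by the norm version
  have habs_r : ∀ v : ℂ, |v.re| ≤ ‖v‖ := fun v => Complex.abs_re_le_norm v
  have habs_i : ∀ v : ℂ, |v.im| ≤ ‖v‖ := fun v => Complex.abs_im_le_norm v
  have hC1 : (0:ℝ) ≤ (1+ρ^2)/ρ^4 := by positivity
  have hC2 : (0:ℝ) ≤ 2*θ*(1+ρ^2)/ρ^2 := by positivity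
  have ha0 : (0:ℝ) < a := hθ.trans hθa
  have hC3 : (0:ℝ) ≤ (1+ρ^2)*(b/ρ^2+a*θ) :=
    mul_nonneg (by positivity) (add_nonneg (by positivity) (mul_nonneg ha0.le hθ.le))
  have hC4 : (0:ℝ) ≤ 2*c*(1+ρ^2) := by positivity
  have hC5 : (0:ℝ) ≤ c*θ*ρ^2*(1+ρ^2) := by positivity
  have hqr := quad_bound hC1 hC2 hC3 hC4 hC5 (habs_r (W 0)) (habs_r (W1 0)) (habs_r (W2 0))
  have hqi := quad_bound hC1 hC2 hC3 hC4 hC5 (habs_i (W 0)) (habs_i (W1 0)) (habs_i (W2 0))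
  have h12 : (1/(2*min (a-θ) (b*θ-c))) ≥ 0 := by positivity
  have hbig := add_le_add hr hi
  calc (∫ τ in (0:ℝ)..t, ((zr τ)^2/ρ^2 + ρ^2*(yr τ)^2))
        + ∫ τ in (0:ℝ)..t, ((zi τ)^2/ρ^2 + ρ^2*(yi τ)^2)
      ≤ (1/(2*min (a-θ) (b*θ-c))) *
          ((1+ρ^2)/ρ^4*(zr 0*zr 0) + 2*θ*(1+ρ^2)/ρ^2*(yr 0*zr 0)
            + (1+ρ^2)*(b/ρ^2+a*θ)*(yr 0*yr 0) + 2*c*(1+ρ^2)*(xr 0*yr 0)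
            + c*θ*ρ^2*(1+ρ^2)*(xr 0*xr 0))
        + (1/(2*min (a-θ) (b*θ-c))) *
          ((1+ρ^2)/ρ^4*(zi 0*zi 0) + 2*θ*(1+ρ^2)/ρ^2*(yi 0*zi 0)
            + (1+ρ^2)*(b/ρ^2+a*θ)*(yi 0*yi 0) + 2*c*(1+ρ^2)*(xi 0*yi 0)
            + c*θ*ρ^2*(1+ρ^2)*(xi 0*xi 0)) := hbig
    _ ≤ (1/(2*min (a-θ) (b*θ-c))) *
          ((1+ρ^2)/ρ^4*(‖W2 0‖*‖W2 0‖) + 2*θ*(1+ρ^2)/ρ^2*(‖W1 0‖*‖W2 0‖)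
            + (1+ρ^2)*(b/ρ^2+a*θ)*(‖W1 0‖*‖W1 0‖) + 2*c*(1+ρ^2)*(‖W 0‖*‖W1 0‖)
            + c*θ*ρ^2*(1+ρ^2)*(‖W 0‖*‖W 0‖))
        + (1/(2*min (a-θ) (b*θ-c))) *
          ((1+ρ^2)/ρ^4*(‖W2 0‖*‖W2 0‖) + 2*θ*(1+ρ^2)/ρ^2*(‖W1 0‖*‖W2 0‖)
            + (1+ρ^2)*(b/ρ^2+a*θ)*(‖W1 0‖*‖W1 0‖) + 2*c*(1+ρ^2)*(‖W 0‖*‖W1 0‖)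
            + c*θ*ρ^2*(1+ρ^2)*(‖W 0‖*‖W 0‖)) := by
        apply add_le_add
        · exact mul_le_mul_of_nonneg_left hqr h12
        · exact mul_le_mul_of_nonneg_left hqi h12
    _ = (1/(min (a-θ) (b*θ-c))) *
          ((1+ρ^2)/ρ^4*(‖W2 0‖*‖W2 0‖) + 2*θ*(1+ρ^2)/ρ^2*(‖W1 0‖*‖W2 0‖)
            + (1+ρ^2)*(b/ρ^2+a*θ)*(‖W1 0‖*‖W1 0‖) + 2*c*(1+ρ^2)*(‖W 0‖*‖W1 0‖)
            + c*θ*ρ^2*(1+ρ^2)*(‖W 0‖*‖W 0‖)) := by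
        field_simp
        ring

lemma data_bound (a b c θ e s ρ N0 N1 N2 X Y F2 Z : ℝ)
    (hθ : 0 < θ) (hθa : θ < a) (hcθ : c < b*θ) (hb : 0 < b) (hc : 0 < c) (he : 0 < e)
    (hρ : 0 < ρ)
    (hX0 : 0 ≤ X) (hY0 : 0 ≤ Y) (hF20 : 0 ≤ F2) (hZ0 : 0 ≤ Z)
    (hN0 : 0 ≤ N0) (hN1 : 0 ≤ N1) (hN2 : 0 ≤ N2)
    (hXb : (1+ρ^2)^(s/2) * X ≤ N0)
    (hYb : (1+ρ^2)^((s-1)/2) * Y ≤ N1)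
    (hF2b : (1+ρ^2)^((s-1)/2) * F2 ≤ N2)
    (hZb : Z ≤ b*ρ^2*X + e*ρ^2*F2) :
    (1/(min (a-θ) (b*θ-c))) *
      ((1+ρ^2)/ρ^4*(Z*Z) + 2*θ*(1+ρ^2)/ρ^2*(Y*Z) + (1+ρ^2)*(b/ρ^2+a*θ)*(Y*Y)
        + 2*c*(1+ρ^2)*(X*Y) + c*θ*ρ^2*(1+ρ^2)*(X*X))
    ≤ ((1/(min (a-θ) (b*θ-c))) * ((b+e)^2 + 2*θ*(b+e) + (b+a*θ) + 2*c + c*θ))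
        * ((N0+N1+N2) * ((1+ρ^2)^((3-s)/2)/ρ))^2 := by
  have ha0 : (0:ℝ) < a := hθ.trans hθa
  have hκ : 0 < min (a-θ) (b*θ-c) := lt_min (by linarith) (by linarith)
  set u := 1+ρ^2 with hu
  have hu0 : (0:ℝ) < u := by rw [hu]; positivity
  have hu1 : (1:ℝ) ≤ u := by rw [hu]; linarith [sq_nonneg ρ]
  have hρu : ρ^2 ≤ u := by rw [hu]; linarith
  set B := u^((1-s)/2) with hB
  have hB0 : (0:ℝ) < B := Real.rpow_pos_of_pos hu0 _
  set NN := N0+N1+N2 with hNN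
  have hNN0 : (0:ℝ) ≤ NN := by rw [hNN]; linarith
  have hN0NN : N0 ≤ NN := by rw [hNN]; linarith
  have hN1NN : N1 ≤ NN := by rw [hNN]; linarith
  have hN2NN : N2 ≤ NN := by rw [hNN]; linarith
  have hBs : B * u^((s-1)/2) = 1 := by
    rw [hB, ← Real.rpow_add hu0, show (1-s)/2 + (s-1)/2 = 0 by ring, Real.rpow_zero]
  have hYB : Y ≤ N1 * B := by
    calc Y = (B*u^((s-1)/2))*Y := by rw [hBs]; ring
      _ = B*(u^((s-1)/2)*Y) := by ring
      _ ≤ B*N1 := mul_le_mul_of_nonneg_left hYb hB0.le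
      _ = N1*B := by ring
  have hF2B : F2 ≤ N2 * B := by
    calc F2 = (B*u^((s-1)/2))*F2 := by rw [hBs]; ring
      _ = B*(u^((s-1)/2)*F2) := by ring
      _ ≤ B*N2 := mul_le_mul_of_nonneg_left hF2b hB0.le
      _ = N2*B := by ring
  have hXB : X ≤ N0 * B := by
    have hexp : u^(-(s/2))*u^(s/2) = 1 := by
      rw [← Real.rpow_add hu0, show -(s/2)+s/2 = 0 by ring, Real.rpow_zero]
    calc X = (u^(-(s/2))*u^(s/2))*X := by rw [hexp]; ring
      _ = u^(-(s/2))*(u^(s/2)*X) := by ring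
      _ ≤ u^(-(s/2))*N0 := mul_le_mul_of_nonneg_left hXb (Real.rpow_pos_of_pos hu0 _).le
      _ ≤ B*N0 := by
          apply mul_le_mul_of_nonneg_right _ hN0
          rw [hB]
          exact Real.rpow_le_rpow_of_exponent_le hu1 (by linarith)
      _ = N0*B := by ring
  have hX2 : u*(X*X) ≤ (N0*N0)*(B*B) := by
    have hsq : (u^(s/2)*X)*(u^(s/2)*X) ≤ N0*N0 :=
      mul_le_mul hXb hXb (by positivity) hN0
    have hus : u^(s/2)*u^(s/2) = u^s := by
      rw [← Real.rpow_add hu0, show s/2+s/2 = s by ring]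
    have h2 : u^s*(X*X) ≤ N0*N0 := by
      calc u^s*(X*X) = (u^(s/2)*u^(s/2))*(X*X) := by rw [hus]
        _ = (u^(s/2)*X)*(u^(s/2)*X) := by ring
        _ ≤ N0*N0 := hsq
    have hBBs : B*B*u^s = u := by
      rw [hB, ← Real.rpow_add hu0, ← Real.rpow_add hu0,
        show (1-s)/2+(1-s)/2+s = 1 by ring, Real.rpow_one]
    calc u*(X*X) = (B*B*u^s)*(X*X) := by rw [hBBs]
      _ = (B*B)*(u^s*(X*X)) := by ring
      _ ≤ (B*B)*(N0*N0) := mul_le_mul_of_nonneg_left h2 (by positivity)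
      _ = (N0*N0)*(B*B) := by ring
  have hZB : Z ≤ ρ^2*B*((b+e)*NN) := by
    have h1 : Z ≤ b*ρ^2*(N0*B) + e*ρ^2*(N2*B) := by
      calc Z ≤ b*ρ^2*X + e*ρ^2*F2 := hZb
        _ ≤ b*ρ^2*(N0*B) + e*ρ^2*(N2*B) :=
            add_le_add (mul_le_mul_of_nonneg_left hXB (by positivity))
              (mul_le_mul_of_nonneg_left hF2B (by positivity))
    have h2 : (0:ℝ) ≤ ρ^2*B := by positivity
    rw [hNN]
    have expand : ρ^2*B*((b+e)*(N0+N1+N2)) - (b*ρ^2*(N0*B) + e*ρ^2*(N2*B))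
        = ρ^2*B*(b*N1 + b*N2 + e*N0 + e*N1) := by ring
    have h4 : (0:ℝ) ≤ ρ^2*B*(b*N1 + b*N2 + e*N0 + e*N1) :=
      mul_nonneg h2 (add_nonneg (add_nonneg (add_nonneg (mul_nonneg hb.le hN1)
        (mul_nonneg hb.le hN2)) (mul_nonneg he.le hN0)) (mul_nonneg he.le hN1))
    linarith [h1, expand, h4]
  have huu : u ≤ u*u/ρ^2 := by
    rw [le_div_iff₀ (by positivity)]
    exact mul_le_mul_of_nonneg_left hρu hu0.le
  set M := (NN*NN)*(B*B)*(u*u)/ρ^2 with hM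
  have hMpart : (0:ℝ) ≤ (NN*NN)*(B*B) := mul_nonneg (mul_nonneg hNN0 hNN0) (by positivity)
  have hZBnn : (0:ℝ) ≤ ρ^2*B*((b+e)*NN) := by
    apply mul_nonneg (by positivity) (mul_nonneg (by positivity) hNN0)
  have hT1 : u/ρ^4*(Z*Z) ≤ (b+e)^2*M := by
    calc u/ρ^4*(Z*Z) ≤ u/ρ^4*((ρ^2*B*((b+e)*NN))*(ρ^2*B*((b+e)*NN))) :=
        mul_le_mul_of_nonneg_left (mul_le_mul hZB hZB hZ0 hZBnn) (by positivity)
      _ = (b+e)^2*((NN*NN)*(B*B)*u) := by field_simp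
      _ ≤ (b+e)^2*((NN*NN)*(B*B)*(u*u/ρ^2)) :=
          mul_le_mul_of_nonneg_left (mul_le_mul_of_nonneg_left huu hMpart) (by positivity)
      _ = (b+e)^2*M := by rw [hM]; ring
  have hT2 : 2*θ*u/ρ^2*(Y*Z) ≤ 2*θ*(b+e)*M := by
    calc 2*θ*u/ρ^2*(Y*Z) ≤ 2*θ*u/ρ^2*((N1*B)*(ρ^2*B*((b+e)*NN))) :=
        mul_le_mul_of_nonneg_left
          (mul_le_mul hYB hZB hZ0 (by positivity)) (by positivity)
      _ = 2*θ*(b+e)*((N1*NN)*(B*B)*u) := by field_simp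
      _ ≤ 2*θ*(b+e)*((NN*NN)*(B*B)*(u*u/ρ^2)) := by
          apply mul_le_mul_of_nonneg_left _ (by positivity)
          calc (N1*NN)*(B*B)*u ≤ (NN*NN)*(B*B)*u := by
                apply mul_le_mul_of_nonneg_right _ hu0.le
                exact mul_le_mul_of_nonneg_right
                  (mul_le_mul_of_nonneg_right hN1NN hNN0) (by positivity)
            _ ≤ (NN*NN)*(B*B)*(u*u/ρ^2) := mul_le_mul_of_nonneg_left huu hMpart
      _ = 2*θ*(b+e)*M := by rw [hM]; ring
  have hT3 : u*(b/ρ^2+a*θ)*(Y*Y) ≤ (b+a*θ)*M := by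
    have hY2 : Y*Y ≤ (NN*NN)*(B*B) := by
      calc Y*Y ≤ (N1*B)*(N1*B) := mul_le_mul hYB hYB hY0 (by positivity)
        _ ≤ (NN*B)*(NN*B) := by
            apply mul_le_mul _ _ (by positivity) (by positivity)
            · exact mul_le_mul_of_nonneg_right hN1NN hB0.le
            · exact mul_le_mul_of_nonneg_right hN1NN hB0.le
        _ = (NN*NN)*(B*B) := by ring
    have e1 : u*(b/ρ^2+a*θ)*(Y*Y) = b*(u/ρ^2)*(Y*Y) + a*θ*u*(Y*Y) := by
      field_simp
    have e2 : b*(u/ρ^2)*(Y*Y) ≤ b*((NN*NN)*(B*B)*(u*u/ρ^2)) := by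
      have h1 : (u/ρ^2)*(Y*Y) ≤ (u/ρ^2)*((NN*NN)*(B*B)) :=
        mul_le_mul_of_nonneg_left hY2 (by positivity)
      have h2 : (u/ρ^2)*((NN*NN)*(B*B)) ≤ (u*u/ρ^2)*((NN*NN)*(B*B)) := by
        apply mul_le_mul_of_nonneg_right _ hMpart
        exact (div_le_div_iff_of_pos_right (by positivity)).mpr (le_mul_of_one_le_left hu0.le hu1)
      calc b*(u/ρ^2)*(Y*Y) = b*((u/ρ^2)*(Y*Y)) := by ring
        _ ≤ b*((u/ρ^2)*((NN*NN)*(B*B))) := mul_le_mul_of_nonneg_left h1 hb.le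
        _ ≤ b*((u*u/ρ^2)*((NN*NN)*(B*B))) := mul_le_mul_of_nonneg_left h2 hb.le
        _ = b*((NN*NN)*(B*B)*(u*u/ρ^2)) := by ring
    have e3 : a*θ*u*(Y*Y) ≤ a*θ*((NN*NN)*(B*B)*(u*u/ρ^2)) := by
      have h1 : u*(Y*Y) ≤ u*((NN*NN)*(B*B)) := mul_le_mul_of_nonneg_left hY2 hu0.le
      have h2 : u*((NN*NN)*(B*B)) ≤ (u*u/ρ^2)*((NN*NN)*(B*B)) :=
        mul_le_mul_of_nonneg_right huu hMpart
      calc a*θ*u*(Y*Y) = a*θ*(u*(Y*Y)) := by ring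
        _ ≤ a*θ*(u*((NN*NN)*(B*B))) :=
            mul_le_mul_of_nonneg_left h1 (mul_nonneg ha0.le hθ.le)
        _ ≤ a*θ*((u*u/ρ^2)*((NN*NN)*(B*B))) :=
            mul_le_mul_of_nonneg_left h2 (mul_nonneg ha0.le hθ.le)
        _ = a*θ*((NN*NN)*(B*B)*(u*u/ρ^2)) := by ring
    calc u*(b/ρ^2+a*θ)*(Y*Y) = b*(u/ρ^2)*(Y*Y) + a*θ*u*(Y*Y) := e1
      _ ≤ b*((NN*NN)*(B*B)*(u*u/ρ^2)) + a*θ*((NN*NN)*(B*B)*(u*u/ρ^2)) := add_le_add e2 e3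
      _ = (b+a*θ)*M := by rw [hM]; ring
  have hN0B : (0:ℝ) ≤ N0*B := mul_nonneg hN0 hB0.le
  have hT4 : 2*c*u*(X*Y) ≤ 2*c*M := by
    calc 2*c*u*(X*Y) ≤ 2*c*u*((N0*B)*(N1*B)) :=
        mul_le_mul_of_nonneg_left (mul_le_mul hXB hYB hY0 hN0B) (by positivity)
      _ = 2*c*((N0*N1)*(B*B)*u) := by ring
      _ ≤ 2*c*((NN*NN)*(B*B)*u) := by
          apply mul_le_mul_of_nonneg_left _ (by positivity)
          exact mul_le_mul_of_nonneg_right (mul_le_mul_of_nonneg_right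
            (mul_le_mul hN0NN hN1NN hN1 hNN0) (by positivity)) hu0.le
      _ ≤ 2*c*((NN*NN)*(B*B)*(u*u/ρ^2)) :=
          mul_le_mul_of_nonneg_left (mul_le_mul_of_nonneg_left huu hMpart) (by positivity)
      _ = 2*c*M := by rw [hM]; ring
  have hT5 : c*θ*ρ^2*u*(X*X) ≤ c*θ*M := by
    calc c*θ*ρ^2*u*(X*X) = c*θ*ρ^2*(u*(X*X)) := by ring
      _ ≤ c*θ*ρ^2*((N0*N0)*(B*B)) := mul_le_mul_of_nonneg_left hX2 (by positivity)
      _ = c*θ*((N0*N0)*(B*B))*ρ^2 := by ring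
      _ ≤ c*θ*((N0*N0)*(B*B))*u := by
          apply mul_le_mul_of_nonneg_left hρu
          exact mul_nonneg (by positivity) (mul_nonneg (mul_nonneg hN0 hN0) (by positivity))
      _ = c*θ*((N0*N0)*(B*B)*u) := by ring
      _ ≤ c*θ*((NN*NN)*(B*B)*u) := by
          apply mul_le_mul_of_nonneg_left _ (by positivity)
          exact mul_le_mul_of_nonneg_right (mul_le_mul_of_nonneg_right
            (mul_le_mul hN0NN hN0NN hN0 hNN0) (by positivity)) hu0.le
      _ ≤ c*θ*((NN*NN)*(B*B)*(u*u/ρ^2)) :=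
          mul_le_mul_of_nonneg_left (mul_le_mul_of_nonneg_left huu hMpart) (by positivity)
      _ = c*θ*M := by rw [hM]; ring
  have hRM : (NN*(u^((3-s)/2)/ρ))^2 = M := by
    have e1 : u^((3-s)/2)*u^((3-s)/2) = u^(3-s) := by
      rw [← Real.rpow_add hu0, show (3-s)/2+(3-s)/2 = 3-s by ring]
    have e2 : B*B = u^(1-s) := by
      rw [hB, ← Real.rpow_add hu0, show (1-s)/2+(1-s)/2 = 1-s by ring]
    have e3 : u^(3-s) = u^(1-s)*(u^(2:ℝ)) := by
      rw [← Real.rpow_add hu0]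
      congr 1
      ring
    have e4 : u^(2:ℝ) = u*u := by
      rw [show (2:ℝ)=((2:ℕ):ℝ) by norm_num, Real.rpow_natCast]; ring
    calc (NN*(u^((3-s)/2)/ρ))^2 = (NN*NN)*(u^((3-s)/2)*u^((3-s)/2))/ρ^2 := by ring
      _ = M := by rw [e1, e3, e4, ← e2, hM]; ring
  have hsum : (u/ρ^4*(Z*Z) + 2*θ*u/ρ^2*(Y*Z) + u*(b/ρ^2+a*θ)*(Y*Y)
      + 2*c*u*(X*Y) + c*θ*ρ^2*u*(X*X))
      ≤ ((b+e)^2 + 2*θ*(b+e) + (b+a*θ) + 2*c + c*θ)*M := by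
    have h := add_le_add (add_le_add (add_le_add (add_le_add hT1 hT2) hT3) hT4) hT5
    linarith [h]
  calc (1/(min (a-θ) (b*θ-c))) *
      (u/ρ^4*(Z*Z) + 2*θ*u/ρ^2*(Y*Z) + u*(b/ρ^2+a*θ)*(Y*Y)
        + 2*c*u*(X*Y) + c*θ*ρ^2*u*(X*X))
      ≤ (1/(min (a-θ) (b*θ-c))) * (((b+e)^2 + 2*θ*(b+e) + (b+a*θ) + 2*c + c*θ)*M) :=
        mul_le_mul_of_nonneg_left hsum (one_div_nonneg.mpr hκ.le)
    _ = ((1/(min (a-θ) (b*θ-c))) * ((b+e)^2 + 2*θ*(b+e) + (b+a*θ) + 2*c + c*θ))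
        * ((NN*(u^((3-s)/2)/ρ))^2) := by rw [hRM]; ring

lemma ofReal_sq_rpow_half (q : ℝ) (hq : 0 ≤ q) :
    (ENNReal.ofReal (q^2)) ^ ((1:ℝ)/2) = ENNReal.ofReal q := by
  rw [ENNReal.ofReal_rpow_of_nonneg (sq_nonneg q) (by norm_num : (0:ℝ) ≤ 1/2)]
  congr 1
  rw [show q^2 = q^(2:ℝ) by rw [← Real.rpow_natCast q 2]; norm_num,
    ← Real.rpow_mul hq]
  norm_num

lemma J_finite {n : ℕ} (hn : 2 ≤ n) (s : ℝ) (hs : (n:ℝ) + 2 < s) :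
    (∫⁻ ξ : EuclideanSpace ℝ (Fin n), ENNReal.ofReal ((1+‖ξ‖^2)^((3-s)/2)/‖ξ‖)) < ⊤ := by
  set E := EuclideanSpace ℝ (Fin n)
  have hfr : Module.finrank ℝ E = n := by simp [E, finrank_euclideanSpace]
  have hn2 : (2:ℝ) ≤ n := by exact_mod_cast hn
  have hs4 : (4:ℝ) ≤ s := by linarith
  have key : ∀ ξ : E, ENNReal.ofReal ((1+‖ξ‖^2)^((3-s)/2)/‖ξ‖)
      ≤ (Metric.closedBall (0:E) 1).indicator (fun ξ => ENNReal.ofReal (‖ξ‖⁻¹)) ξ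
        + ENNReal.ofReal ((2:ℝ)^(s-2)*(1+‖ξ‖)^(-(s-2))) := by
    intro ξ
    by_cases hξ1 : ‖ξ‖ ≤ 1
    · have hmem : ξ ∈ Metric.closedBall (0:E) 1 := by
        simpa [Metric.mem_closedBall, dist_zero_right] using hξ1
      rw [Set.indicator_of_mem hmem]
      have h1 : (1+‖ξ‖^2)^((3-s)/2) ≤ 1 :=
        Real.rpow_le_one_of_one_le_of_nonpos (by nlinarith [sq_nonneg ‖ξ‖]) (by linarith)
      have h2 : (1+‖ξ‖^2)^((3-s)/2)/‖ξ‖ ≤ ‖ξ‖⁻¹ := by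
        rcases eq_or_lt_of_le (norm_nonneg ξ) with h0 | h0
        · rw [← h0]; simp
        · rw [← one_div]
          exact (div_le_div_iff_of_pos_right h0).mpr h1
      calc ENNReal.ofReal ((1+‖ξ‖^2)^((3-s)/2)/‖ξ‖) ≤ ENNReal.ofReal (‖ξ‖⁻¹) :=
            ENNReal.ofReal_le_ofReal h2
        _ ≤ _ := le_self_add
    · push_neg at hξ1
      have hρ0 : (0:ℝ) < ‖ξ‖ := lt_trans one_pos hξ1
      rw [Set.indicator_of_notMem (by
        simpa [Metric.mem_closedBall, dist_zero_right] using not_le.mpr hξ1)]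
      rw [zero_add]
      apply ENNReal.ofReal_le_ofReal
      have c1 : (1+‖ξ‖^2)^((3-s)/2) ≤ (‖ξ‖^2)^((3-s)/2) :=
        Real.rpow_le_rpow_of_nonpos (by positivity) (by nlinarith) (by linarith)
      have c2 : (‖ξ‖^2)^((3-s)/2) = ‖ξ‖^(3-s) := by
        rw [← Real.rpow_natCast ‖ξ‖ 2, ← Real.rpow_mul (norm_nonneg ξ)]
        congr 1
        push_cast
        ring
      have c3 : (1+‖ξ‖^2)^((3-s)/2)/‖ξ‖ ≤ ‖ξ‖^(2-s) := by
        rw [show (2-s) = (3-s)-1 by ring, Real.rpow_sub hρ0, Real.rpow_one]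
        exact (div_le_div_iff_of_pos_right hρ0).mpr (le_of_le_of_eq c1 c2)
      have c4 : ‖ξ‖^(2-s) ≤ ((1+‖ξ‖)/2)^(2-s) :=
        Real.rpow_le_rpow_of_nonpos (by linarith) (by linarith) (by linarith)
      have c5 : ((1+‖ξ‖)/2)^(2-s) = (2:ℝ)^(s-2)*(1+‖ξ‖)^(-(s-2)) := by
        rw [Real.div_rpow (by linarith) (by norm_num), show (2-s) = -(s-2) by ring,
          Real.rpow_neg (by norm_num : (0:ℝ) ≤ 2), div_inv_eq_mul]
        ring
      calc (1+‖ξ‖^2)^((3-s)/2)/‖ξ‖ ≤ ‖ξ‖^(2-s) := c3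
        _ ≤ ((1+‖ξ‖)/2)^(2-s) := c4
        _ = (2:ℝ)^(s-2)*(1+‖ξ‖)^(-(s-2)) := c5
  have hmeasInd : Measurable (fun ξ : E =>
      (Metric.closedBall (0:E) 1).indicator (fun ξ => ENNReal.ofReal (‖ξ‖⁻¹)) ξ) :=
    (measurable_norm.inv.ennreal_ofReal).indicator Metric.isClosed_closedBall.measurableSet
  calc (∫⁻ ξ : E, ENNReal.ofReal ((1+‖ξ‖^2)^((3-s)/2)/‖ξ‖))
      ≤ ∫⁻ ξ : E, ((Metric.closedBall (0:E) 1).indicator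
          (fun ξ => ENNReal.ofReal (‖ξ‖⁻¹)) ξ
        + ENNReal.ofReal ((2:ℝ)^(s-2)*(1+‖ξ‖)^(-(s-2)))) := lintegral_mono key
    _ = (∫⁻ ξ : E, (Metric.closedBall (0:E) 1).indicator
          (fun ξ => ENNReal.ofReal (‖ξ‖⁻¹)) ξ)
        + ∫⁻ ξ : E, ENNReal.ofReal ((2:ℝ)^(s-2)*(1+‖ξ‖)^(-(s-2))) :=
        lintegral_add_left hmeasInd _
    _ < ⊤ := by
        apply ENNReal.add_lt_top.2
        constructor
        · rw [lintegral_indicator Metric.isClosed_closedBall.measurableSet]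
          exact ball_inv_finite hn
        · have heq : ∀ ξ : E, ENNReal.ofReal ((2:ℝ)^(s-2)*(1+‖ξ‖)^(-(s-2)))
              = ENNReal.ofReal ((2:ℝ)^(s-2)) * ENNReal.ofReal ((1+‖ξ‖)^(-(s-2))) :=
            fun ξ => ENNReal.ofReal_mul (by positivity)
          simp_rw [heq]
          rw [lintegral_const_mul' _ _ ENNReal.ofReal_ne_top]
          exact ENNReal.mul_lt_top ENNReal.ofReal_lt_top
            (finite_integral_one_add_norm (by rw [hfr]; linarith))


/-- Fourier transform `f̂(ξ) = ∫ e^{−i x·ξ} f(x) dx` of a real-valued function on `ℝⁿ`. -/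
noncomputable def ftR {n : ℕ} (f : EuclideanSpace ℝ (Fin n) → ℝ)
    (ξ : EuclideanSpace ℝ (Fin n)) : ℂ :=
  ∫ x, Complex.exp (-Complex.I * ((∑ i, x i * ξ i : ℝ) : ℂ)) * (f x : ℂ)

/-- The weighted Fourier sup-norm `N_σ(g) = sup_ξ (1+|ξ|²)^{σ/2} |ĝ(ξ)|` (in `[0,∞]`). -/
noncomputable def fourierSup {n : ℕ} (σ : ℝ) (g : EuclideanSpace ℝ (Fin n) → ℝ) : ENNReal :=
  ⨆ ξ : EuclideanSpace ℝ (Fin n),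
    ENNReal.ofReal ((1 + ‖ξ‖ ^ 2) ^ (σ / 2) * ‖ftR g ξ‖)

/-- Proposition 5.4: for the inviscid phase-space solution `w`,
`∫ ( ∫₀^t |ξ|^{−2}|∂_t²w|² + |ξ|²|∂_t w|² dτ )^{1/2} dξ
  ≤ C (N_s(φ₀) + N_{s−1}(φ₁) + N_{s−1}(T₀))` uniformly in `t > 0`. -/
theorem stmt_19 {n : ℕ} (hn : 2 ≤ n) (s : ℝ) (hs : (n : ℝ) + 2 < s)
    (c₀ D αp γ : ℝ) (hc₀ : 0 < c₀) (hD : 0 < D) (hαp : 0 < αp) (hγ : 1 < γ)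
    (φ₀ φ₁ T₀ : EuclideanSpace ℝ (Fin n) → ℝ)
    (hφ₀1 : Integrable φ₀ volume) (hφ₁1 : Integrable φ₁ volume) (hT₀1 : Integrable T₀ volume)
    (hφ₀N : fourierSup s φ₀ < ⊤) (hφ₁N : fourierSup (s - 1) φ₁ < ⊤)
    (hT₀N : fourierSup (s - 1) T₀ < ⊤)
    (w : ℝ → EuclideanSpace ℝ (Fin n) → ℂ)
    (hreg : ∀ ξ, ContDiff ℝ 3 (fun τ : ℝ => w τ ξ))
    (hODE : ∀ ξ, ∀ t : ℝ, 0 ≤ t →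
      deriv (deriv (deriv (fun τ => w τ ξ))) t
        + ((γ * D * ‖ξ‖ ^ 2 : ℝ) : ℂ) * deriv (deriv (fun τ => w τ ξ)) t
        + ((γ * c₀ ^ 2 * ‖ξ‖ ^ 2 : ℝ) : ℂ) * deriv (fun τ => w τ ξ) t
        + ((γ * D * c₀ ^ 2 * ‖ξ‖ ^ 4 : ℝ) : ℂ) * w t ξ = 0)
    (hinit0 : ∀ ξ, w 0 ξ = ftR φ₀ ξ)
    (hinit1 : ∀ ξ, deriv (fun τ => w τ ξ) 0 = ftR φ₁ ξ)
    (hinit2 : ∀ ξ, deriv (deriv (fun τ => w τ ξ)) 0 =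
      -((γ * c₀ ^ 2 * ‖ξ‖ ^ 2 : ℝ) : ℂ) * ftR φ₀ ξ
        + ((αp * c₀ ^ 2 * γ * D * ‖ξ‖ ^ 2 : ℝ) : ℂ) * ftR T₀ ξ) :
    ∃ C : ℝ, 0 < C ∧ ∀ t : ℝ, 0 < t →
      (∫⁻ ξ, (∫⁻ τ in Set.Ioc (0 : ℝ) t,
          ENNReal.ofReal (‖deriv (deriv (fun τ' => w τ' ξ)) τ‖ ^ 2 / ‖ξ‖ ^ 2
            + ‖ξ‖ ^ 2 * ‖deriv (fun τ' => w τ' ξ) τ‖ ^ 2)) ^ ((1 : ℝ) / 2))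
        ≤ ENNReal.ofReal C *
            (fourierSup s φ₀ + fourierSup (s - 1) φ₁ + fourierSup (s - 1) T₀) := by
  have hγ0 : (0:ℝ) < γ := lt_trans one_pos hγ
  have hθ : (0:ℝ) < D*(1+γ)/2 := by
    have := mul_pos hD (show (0:ℝ) < 1+γ by linarith)
    linarith
  have hθa : D*(1+γ)/2 < γ*D := by nlinarith [mul_pos hD (sub_pos.mpr hγ)]
  have hb : (0:ℝ) < γ*c₀^2 := mul_pos hγ0 (pow_pos hc₀ 2)
  have hc : (0:ℝ) < γ*D*c₀^2 := mul_pos (mul_pos hγ0 hD) (pow_pos hc₀ 2)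
  have hcθ : γ*D*c₀^2 < (γ*c₀^2)*(D*(1+γ)/2) := by
    nlinarith [mul_pos hc (sub_pos.mpr hγ)]
  have he : (0:ℝ) < αp*c₀^2*γ*D := mul_pos (mul_pos (mul_pos hαp (pow_pos hc₀ 2)) hγ0) hD
  have hκ : (0:ℝ) < min (γ*D - D*(1+γ)/2) ((γ*c₀^2)*(D*(1+γ)/2) - γ*D*c₀^2) :=
    lt_min (by linarith) (by linarith)
  set K0 := (1/(min (γ*D - D*(1+γ)/2) ((γ*c₀^2)*(D*(1+γ)/2) - γ*D*c₀^2))) *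
    (((γ*c₀^2)+(αp*c₀^2*γ*D))^2 + 2*(D*(1+γ)/2)*((γ*c₀^2)+(αp*c₀^2*γ*D))
      + ((γ*c₀^2)+(γ*D)*(D*(1+γ)/2)) + 2*(γ*D*c₀^2) + (γ*D*c₀^2)*(D*(1+γ)/2)) with hK0
  have hK00 : (0:ℝ) ≤ K0 := by
    rw [hK0]
    apply mul_nonneg (one_div_nonneg.mpr hκ.le)
    have h1 : (0:ℝ) < ((γ*c₀^2)+(αp*c₀^2*γ*D))^2 := pow_pos (by linarith) 2
    have h2 : (0:ℝ) < 2*(D*(1+γ)/2)*((γ*c₀^2)+(αp*c₀^2*γ*D)) :=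
      mul_pos (by linarith) (by linarith)
    have h3 : (0:ℝ) < (γ*D)*(D*(1+γ)/2) := mul_pos (mul_pos hγ0 hD) hθ
    have h4 : (0:ℝ) < (γ*D*c₀^2)*(D*(1+γ)/2) := mul_pos hc hθ
    linarith
  set c₁ := Real.sqrt K0 with hc₁
  have hc₁0 : (0:ℝ) ≤ c₁ := Real.sqrt_nonneg _
  set N₀ := (fourierSup s φ₀).toReal with hN₀
  set N₁ := (fourierSup (s-1) φ₁).toReal with hN₁
  set N₂ := (fourierSup (s-1) T₀).toReal with hN₂
  have hN₀0 : 0 ≤ N₀ := ENNReal.toReal_nonneg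
  have hN₁0 : 0 ≤ N₁ := ENNReal.toReal_nonneg
  have hN₂0 : 0 ≤ N₂ := ENNReal.toReal_nonneg
  have hNN0 : (0:ℝ) ≤ N₀+N₁+N₂ := by linarith
  have hb₀ : ∀ ξ, (1+‖ξ‖^2)^(s/2)*‖ftR φ₀ ξ‖ ≤ N₀ := by
    intro ξ
    have h' : ENNReal.ofReal ((1+‖ξ‖^2)^(s/2)*‖ftR φ₀ ξ‖) ≤ fourierSup s φ₀ :=
      le_iSup (fun ξ => ENNReal.ofReal ((1+‖ξ‖^2)^(s/2)*‖ftR φ₀ ξ‖)) ξ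
    exact (ENNReal.ofReal_le_iff_le_toReal hφ₀N.ne).mp h'
  have hb₁ : ∀ ξ, (1+‖ξ‖^2)^((s-1)/2)*‖ftR φ₁ ξ‖ ≤ N₁ := by
    intro ξ
    have h' : ENNReal.ofReal ((1+‖ξ‖^2)^((s-1)/2)*‖ftR φ₁ ξ‖) ≤ fourierSup (s-1) φ₁ :=
      le_iSup (fun ξ => ENNReal.ofReal ((1+‖ξ‖^2)^((s-1)/2)*‖ftR φ₁ ξ‖)) ξ
    exact (ENNReal.ofReal_le_iff_le_toReal hφ₁N.ne).mp h'
  have hb₂ : ∀ ξ, (1+‖ξ‖^2)^((s-1)/2)*‖ftR T₀ ξ‖ ≤ N₂ := by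
    intro ξ
    have h' : ENNReal.ofReal ((1+‖ξ‖^2)^((s-1)/2)*‖ftR T₀ ξ‖) ≤ fourierSup (s-1) T₀ :=
      le_iSup (fun ξ => ENNReal.ofReal ((1+‖ξ‖^2)^((s-1)/2)*‖ftR T₀ ξ‖)) ξ
    exact (ENNReal.ofReal_le_iff_le_toReal hT₀N.ne).mp h'
  have hofN : ENNReal.ofReal (N₀+N₁+N₂)
      = fourierSup s φ₀ + fourierSup (s-1) φ₁ + fourierSup (s-1) T₀ := by
    rw [ENNReal.ofReal_add (by linarith) hN₂0, ENNReal.ofReal_add hN₀0 hN₁0,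
      hN₀, hN₁, hN₂, ENNReal.ofReal_toReal hφ₀N.ne, ENNReal.ofReal_toReal hφ₁N.ne,
      ENNReal.ofReal_toReal hT₀N.ne]
  have hJ := J_finite hn s hs
  set J := ∫⁻ ξ : EuclideanSpace ℝ (Fin n), ENNReal.ofReal ((1+‖ξ‖^2)^((3-s)/2)/‖ξ‖)
    with hJdef
  refine ⟨c₁*(J.toReal+1) + 1, by positivity, ?_⟩
  intro t ht
  -- the origin is a null set
  have h0 : (volume : Measure (EuclideanSpace ℝ (Fin n))) {0} = 0 := by
    have h1 : ({(0:EuclideanSpace ℝ (Fin n))} : Set _) ⊆ Metric.closedBall 0 0 := by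
      intro x hx
      simp only [Set.mem_singleton_iff] at hx
      simp [hx]
    apply measure_mono_null h1
    rw [Measure.addHaar_closedBall _ _ le_rfl,
      show Module.finrank ℝ (EuclideanSpace ℝ (Fin n)) = n from by simp [finrank_euclideanSpace],
      zero_pow (by omega : n ≠ 0)]
    simp
  have hae : ∀ᵐ ξ : EuclideanSpace ℝ (Fin n) ∂volume, ξ ≠ 0 := by
    rw [ae_iff]
    have : {a : EuclideanSpace ℝ (Fin n) | ¬ a ≠ 0} = {0} := by ext a; simp
    rw [this]
    exact h0
  calc (∫⁻ ξ, (∫⁻ τ in Set.Ioc (0 : ℝ) t,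
          ENNReal.ofReal (‖deriv (deriv (fun τ' => w τ' ξ)) τ‖ ^ 2 / ‖ξ‖ ^ 2
            + ‖ξ‖ ^ 2 * ‖deriv (fun τ' => w τ' ξ) τ‖ ^ 2)) ^ ((1 : ℝ) / 2))
      ≤ ∫⁻ ξ, (ENNReal.ofReal c₁ * ENNReal.ofReal (N₀+N₁+N₂))
          * ENNReal.ofReal ((1+‖ξ‖^2)^((3-s)/2)/‖ξ‖) := by
        apply lintegral_mono_ae
        filter_upwards [hae] with ξ hξ
        have hρ : (0:ℝ) < ‖ξ‖ := norm_pos_iff.mpr hξ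
        have h3 := hreg ξ
        have hW1 : ContDiff ℝ 2 (deriv (fun τ => w τ ξ)) :=
          ((contDiff_succ_iff_deriv (n := 2)).mp h3).2.2
        have hW2 : ContDiff ℝ 1 (deriv (deriv (fun τ => w τ ξ))) :=
          ((contDiff_succ_iff_deriv (n := 1)).mp hW1).2.2
        have hc1c : Continuous (deriv (fun τ => w τ ξ)) := hW1.continuous
        have hc2c : Continuous (deriv (deriv (fun τ => w τ ξ))) := hW2.continuous
        set f : ℝ → ℝ := fun τ => ‖deriv (deriv (fun τ' => w τ' ξ)) τ‖^2/‖ξ‖^2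
          + ‖ξ‖^2*‖deriv (fun τ' => w τ' ξ) τ‖^2 with hf
        have hfc : Continuous f :=
          ((hc2c.norm.pow 2).div_const _).add (continuous_const.mul (hc1c.norm.pow 2))
        have hfnn : ∀ τ, 0 ≤ f τ := fun τ =>
          add_nonneg (div_nonneg (by positivity) (by positivity)) (by positivity)
        have hfint : IntegrableOn f (Set.Ioc 0 t) volume := hfc.integrableOn_Ioc
        have hlin : (∫⁻ τ in Set.Ioc (0:ℝ) t, ENNReal.ofReal (f τ))
            = ENNReal.ofReal (∫ τ in (0:ℝ)..t, f τ) := by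
          rw [intervalIntegral.integral_of_le ht.le]
          exact (ofReal_integral_eq_lintegral_ofReal hfint (ae_of_all _ hfnn)).symm
        have hE := complex_energy (γ*D) (γ*c₀^2) (γ*D*c₀^2) (D*(1+γ)/2) ‖ξ‖ hρ hθ hθa hcθ
          hb hc (fun τ => w τ ξ) (hreg ξ) (fun τ hτ => hODE ξ τ hτ) t ht.le
        beta_reduce at hE
        rw [hinit0 ξ, hinit1 ξ] at hE
        have hZb : ‖deriv (deriv (fun τ => w τ ξ)) 0‖
            ≤ (γ*c₀^2)*‖ξ‖^2*‖ftR φ₀ ξ‖ + (αp*c₀^2*γ*D)*‖ξ‖^2*‖ftR T₀ ξ‖ := by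
          rw [hinit2 ξ]
          refine (norm_add_le _ _).trans ?_
          rw [norm_mul, norm_mul, norm_neg, Complex.norm_real, Complex.norm_real,
            Real.norm_eq_abs, Real.norm_eq_abs,
            abs_of_nonneg (by positivity : (0:ℝ) ≤ γ*c₀^2*‖ξ‖^2),
            abs_of_nonneg (by positivity : (0:ℝ) ≤ αp*c₀^2*γ*D*‖ξ‖^2)]
        have hDb := data_bound (γ*D) (γ*c₀^2) (γ*D*c₀^2) (D*(1+γ)/2) (αp*c₀^2*γ*D) s ‖ξ‖
          N₀ N₁ N₂ (‖ftR φ₀ ξ‖) (‖ftR φ₁ ξ‖) (‖ftR T₀ ξ‖)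
          (‖deriv (deriv (fun τ => w τ ξ)) 0‖)
          hθ hθa hcθ hb hc he hρ (norm_nonneg _) (norm_nonneg _) (norm_nonneg _)
          (norm_nonneg _) hN₀0 hN₁0 hN₂0 (hb₀ ξ) (hb₁ ξ) (hb₂ ξ) hZb
        have hcomb : ∫ τ in (0:ℝ)..t, f τ
            ≤ K0 * ((N₀+N₁+N₂)*((1+‖ξ‖^2)^((3-s)/2)/‖ξ‖))^2 := hE.trans hDb
        have hcsq : c₁^2 = K0 := by rw [hc₁]; exact Real.sq_sqrt hK00
        have hq : K0 * ((N₀+N₁+N₂)*((1+‖ξ‖^2)^((3-s)/2)/‖ξ‖))^2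
            = (c₁*((N₀+N₁+N₂)*((1+‖ξ‖^2)^((3-s)/2)/‖ξ‖)))^2 := by
          rw [← hcsq]; ring
        calc (∫⁻ τ in Set.Ioc (0:ℝ) t, ENNReal.ofReal (f τ)) ^ ((1:ℝ)/2)
            = (ENNReal.ofReal (∫ τ in (0:ℝ)..t, f τ)) ^ ((1:ℝ)/2) := by rw [hlin]
          _ ≤ (ENNReal.ofReal ((c₁*((N₀+N₁+N₂)*((1+‖ξ‖^2)^((3-s)/2)/‖ξ‖)))^2)) ^ ((1:ℝ)/2) := by
              apply ENNReal.rpow_le_rpow _ (by norm_num)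
              apply ENNReal.ofReal_le_ofReal
              rw [← hq]
              exact hcomb
          _ = ENNReal.ofReal (c₁*((N₀+N₁+N₂)*((1+‖ξ‖^2)^((3-s)/2)/‖ξ‖))) :=
              ofReal_sq_rpow_half _ (mul_nonneg hc₁0 (mul_nonneg hNN0 (by positivity)))
          _ = (ENNReal.ofReal c₁ * ENNReal.ofReal (N₀+N₁+N₂))
              * ENNReal.ofReal ((1+‖ξ‖^2)^((3-s)/2)/‖ξ‖) := by
              rw [ENNReal.ofReal_mul hc₁0, ENNReal.ofReal_mul hNN0, mul_assoc]
    _ = (ENNReal.ofReal c₁ * ENNReal.ofReal (N₀+N₁+N₂)) * J :=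
        lintegral_const_mul' _ _ (ENNReal.mul_ne_top ENNReal.ofReal_ne_top ENNReal.ofReal_ne_top)
    _ = (ENNReal.ofReal c₁ * J) * ENNReal.ofReal (N₀+N₁+N₂) := by
        rw [mul_right_comm]
    _ ≤ ENNReal.ofReal (c₁*(J.toReal+1) + 1) * ENNReal.ofReal (N₀+N₁+N₂) := by
        apply mul_le_mul_left
        calc ENNReal.ofReal c₁ * J ≤ ENNReal.ofReal c₁ * ENNReal.ofReal (J.toReal+1) := by
              apply mul_le_mul_right
              calc J = ENNReal.ofReal J.toReal := (ENNReal.ofReal_toReal hJ.ne).symm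
                _ ≤ ENNReal.ofReal (J.toReal+1) := ENNReal.ofReal_le_ofReal (by linarith)
          _ = ENNReal.ofReal (c₁*(J.toReal+1)) := (ENNReal.ofReal_mul hc₁0).symm
          _ ≤ ENNReal.ofReal (c₁*(J.toReal+1) + 1) := ENNReal.ofReal_le_ofReal (by linarith)
    _ = ENNReal.ofReal (c₁*(J.toReal+1) + 1) *
        (fourierSup s φ₀ + fourierSup (s-1) φ₁ + fourierSup (s-1) T₀) := by rw [hofN]
end
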